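/- arXiv:1308.0948 — 5 statements merged into one kernel-verified Lean document; each statement's English description precedes it below -/
import Mathlib

section
/- Let ℌ be a quotient-closed Fitting class and 𝔉 a formation, and let N be a normal subgroup of a finite group G. Then N_{ℌ,𝔉}(G)N/N ≤ N_{ℌ,𝔉}(G/N), where N_{ℌ,𝔉}(G) = ⋂_{H ≤ G} N_G(H^𝔉 G_ℌ). -/
universe u

/-- A class of groups (in universe `u`). -/
def GroupClass : Type (u + 1) := ∀ (G : Type u) [Group G], Prop

/-- Closed under homomorphic images (quotients). -/
def GroupClass.QClosed (F : GroupClass.{u}) : Prop :=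
  ∀ (G : Type u) [Group G] (H : Type u) [Group H] (f : G →* H),
    Function.Surjective f → F G → F H

/-- Closed under subdirect products: if `G/N₁ ∈ F` and `G/N₂ ∈ F` then `G/(N₁ ⊓ N₂) ∈ F`. -/
def GroupClass.SubdirClosed (F : GroupClass.{u}) : Prop :=
  ∀ (G : Type u) [Group G] (N₁ N₂ : Subgroup G) (h₁ : N₁.Normal) (h₂ : N₂.Normal),
    (letI := h₁; F (G ⧸ N₁)) → (letI := h₂; F (G ⧸ N₂)) →
    (letI : (N₁ ⊓ N₂).Normal :=
      { conj_mem := fun x hx g => ⟨h₁.conj_mem x hx.1 g, h₂.conj_mem x hx.2 g⟩ };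
      F (G ⧸ (N₁ ⊓ N₂)))

/-- Closed under taking subgroups. -/
def GroupClass.SClosed (F : GroupClass.{u}) : Prop :=
  ∀ (G : Type u) [Group G] (H : Subgroup G), F G → F ↥H

/-- Closed under taking normal subgroups. -/
def GroupClass.NClosed (F : GroupClass.{u}) : Prop :=
  ∀ (G : Type u) [Group G] (N : Subgroup G), N.Normal → F G → F ↥N

/-- Closed under products of normal subgroups. -/
def GroupClass.NProdClosed (F : GroupClass.{u}) : Prop :=
  ∀ (G : Type u) [Group G] (N₁ N₂ : Subgroup G), N₁.Normal → N₂.Normal →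
    F ↥N₁ → F ↥N₂ → F ↥(N₁ ⊔ N₂)

/-- Closed under extensions. -/
def GroupClass.ExtClosed (F : GroupClass.{u}) : Prop :=
  ∀ (G : Type u) [Group G] (N : Subgroup G) (hN : N.Normal),
    F ↥N → (letI := hN; F (G ⧸ N)) → F G

/-- `R` is the `F`-residual of `G`: the smallest normal subgroup with quotient in `F`. -/
def IsResidual (F : GroupClass.{u}) (G : Type u) [Group G] (R : Subgroup G) : Prop :=
  ∃ hR : R.Normal, (letI := hR; F (G ⧸ R)) ∧
    ∀ (N : Subgroup G) (hN : N.Normal), (letI := hN; F (G ⧸ N)) → R ≤ N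

/-- `R` is the `H`-radical of `G`: the largest normal subgroup belonging to `H`. -/
def IsHRadical (H : GroupClass.{u}) (G : Type u) [Group G] (R : Subgroup G) : Prop :=
  R.Normal ∧ H ↥R ∧ ∀ N : Subgroup G, N.Normal → H ↥N → N ≤ R

/-- The `ℌ`-`𝔉`-norm of `G` (given a residual function `res` and a radical function `rad`):
the intersection over all subgroups `K ≤ G` of the normalizers of `K^𝔉 G_ℌ`. -/
noncomputable def HFnorm (res rad : ∀ (A : Type u) [Group A], Subgroup A)
    (G : Type u) [Group G] : Subgroup G :=
  ⨅ K : Subgroup G, Subgroup.normalizer ((Subgroup.map K.subtype (res ↥K) ⊔ rad G : Subgroup G) : Set G)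

/-- `G` is a `π`-group: every prime dividing its order lies in `π`. -/
def IsPiGroup (π : Set ℕ) (G : Type u) [Group G] : Prop :=
  ∀ p : ℕ, p.Prime → p ∣ Nat.card G → p ∈ π

/-- The subgroup `O_π(G)`, generated by all normal `π`-subgroups of `G`. -/
noncomputable def Opi (π : Set ℕ) (G : Type u) [Group G] : Subgroup G :=
  ⨆ (N : Subgroup G) (_ : N.Normal) (_ : IsPiGroup π ↥N), N

/-- `G` is `π`-solvable: it has a finite normal series whose factors are
`π'`-groups or solvable `π`-groups. -/
def IsPiSolvable (π : Set ℕ) (G : Type u) [Group G] : Prop :=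
  ∃ (n : ℕ) (c : Fin (n + 1) → Subgroup G),
    c 0 = ⊥ ∧ c (Fin.last n) = ⊤ ∧
    ∀ i : Fin n, (c i.castSucc) ≤ (c i.succ) ∧
      ((c i.castSucc).subgroupOf (c i.succ)).Normal ∧
      ∀ h : ((c i.castSucc).subgroupOf (c i.succ)).Normal,
        (letI := h;
          IsPiGroup {p | p ∉ π} (↥(c i.succ) ⧸ (c i.castSucc).subgroupOf (c i.succ)) ∨
          (IsPiGroup π (↥(c i.succ) ⧸ (c i.castSucc).subgroupOf (c i.succ)) ∧
            IsSolvable (↥(c i.succ) ⧸ (c i.castSucc).subgroupOf (c i.succ))))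

/-- `G` is `π`-nilpotent: it has a normal `π'`-subgroup with nilpotent quotient
(equivalently `G/O_{π'}(G)` is nilpotent). -/
def IsPiNilpotent (π : Set ℕ) (G : Type u) [Group G] : Prop :=
  ∃ (N : Subgroup G) (hN : N.Normal), IsPiGroup {p | p ∉ π} ↥N ∧
    (letI := hN; Group.IsNilpotent (G ⧸ N))

/-- `G` is `S`-critical for the class `F`. -/
def CritS (F : GroupClass.{u}) (G : Type u) [Group G] : Prop :=
  ¬ F G ∧ ∀ K : Subgroup G, K ≠ ⊤ → F ↥K

/-- The ascending norm series associated with a "norm" functor `n`: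
`N⁰ = 1` and `Nⁱ(G)` is the preimage in `G` of `n(G/Nⁱ⁻¹(G))`. -/
inductive NormChain (n : ∀ (A : Type u) [Group A], Subgroup A)
    (G : Type u) [Group G] : Subgroup G → Prop
  | base : NormChain n G ⊥
  | step (M : Subgroup G) (hM : M.Normal) : NormChain n G M →
      NormChain n G (letI := hM; Subgroup.comap (QuotientGroup.mk' M) (n (G ⧸ M)))

/-- `S` is the terminal term `N^∞(G)` of the ascending norm series of `G`. -/
def IsNormTerminal (n : ∀ (A : Type u) [Group A], Subgroup A)
    (G : Type u) [Group G] (S : Subgroup G) : Prop :=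
  NormChain n G S ∧ ∃ hS : S.Normal, (letI := hS; n (G ⧸ S) = ⊥)

/-- `L/K` is a chief factor of `G`. -/
def IsChiefFactor (G : Type u) [Group G] (K L : Subgroup G) : Prop :=
  K.Normal ∧ L.Normal ∧ K < L ∧
    ∀ M : Subgroup G, M.Normal → K ≤ M → M ≤ L → M = K ∨ M = L

/-- The chief factor `L/K` is `X`-central in `G`:
`(L/K) ⋊ (G/C_G(L/K)) ∈ X`, where `G/C_G(L/K)` acts on `L/K` by conjugation. -/
def IsXCentral (X : GroupClass.{u}) (G : Type u) [Group G] (K L : Subgroup G)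
    (hK : K.Normal) (hL : L.Normal) (_ : K ≤ L) : Prop :=
  ∃ (C : Subgroup G) (hC : C.Normal),
    (∀ g : G, g ∈ C ↔ ∀ x ∈ L, g * x * g⁻¹ * x⁻¹ ∈ K) ∧
    (letI := hC; letI := hK.subgroupOf L;
      ∃ φ : (G ⧸ C) →* MulAut (↥L ⧸ K.subgroupOf L),
        (∀ (g : G) (x : ↥L), φ (QuotientGroup.mk g) (QuotientGroup.mk x) =
          QuotientGroup.mk ⟨g * ↑x * g⁻¹, hL.conj_mem ↑x x.2 g⟩) ∧
        X (SemidirectProduct (↥L ⧸ K.subgroupOf L) (G ⧸ C) φ))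

/-- A normal subgroup `N` of `G` is `πX`-hypercentral: every `G`-chief factor below `N`
of order divisible by some prime in `π` is `X`-central in `G`. -/
def PiHypercentral (π : Set ℕ) (X : GroupClass.{u}) (G : Type u) [Group G]
    (N : Subgroup G) : Prop :=
  N.Normal ∧ ∀ K L : Subgroup G, ∀ hcf : IsChiefFactor G K L, L ≤ N →
    (∃ p ∈ π, p.Prime ∧ p ∣ Nat.card (↥L ⧸ K.subgroupOf L)) →
    IsXCentral X G K L hcf.1 hcf.2.1 hcf.2.2.1.le

/-- The `πX`-hypercentre of `G`: the product of all `πX`-hypercentral normal subgroups. -/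
noncomputable def piHypercentre (π : Set ℕ) (X : GroupClass.{u})
    (G : Type u) [Group G] : Subgroup G :=
  sSup {N : Subgroup G | PiHypercentral π X G N}

/-- A group is quaternion-free if it has no section isomorphic to `Q₈`. -/
def QuaternionFree (X : Type u) [Group X] : Prop :=
  ∀ (H : Subgroup X) (K : Subgroup ↥H) (hK : K.Normal),
    (letI := hK; ¬ Nonempty ((↥H ⧸ K) ≃* QuaternionGroup 2))

open Classical in
/-- `Ψ_p(X)`: generated by the elements of order `p` (for odd `p`); for `p = 2`, by the
elements of order `2` if the Sylow `2`-subgroups are quaternion-free, and by the elements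
of order `2` or `4` otherwise. -/
noncomputable def Psi (p : ℕ) (X : Type u) [Group X] : Subgroup X :=
  if p = 2 ∧ ¬ (∀ P : Sylow 2 X, QuaternionFree ↥(P : Subgroup X)) then
    Subgroup.closure {x : X | orderOf x = 2 ∨ orderOf x = 4}
  else Subgroup.closure {x : X | orderOf x = p}

/-- The `π'𝔉`-norm of `G`: the intersection over all subgroups `K ≤ G` of the
normalizers of `K^𝔉 O_{π'}(G)`. -/
noncomputable def piPrimeNorm (π : Set ℕ) (res : ∀ (A : Type u) [Group A], Subgroup A)
    (G : Type u) [Group G] : Subgroup G :=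
  HFnorm res (fun B iB => letI := iB; Opi {p | p ∉ π} B) G
-- aux 1
lemma aux_mem_normalizer_sup {G : Type*} [Group G] {A B : Subgroup G} {x : G}
    (ha : x ∈ Subgroup.normalizer (A : Set G)) (hb : x ∈ Subgroup.normalizer (B : Set G)) : x ∈ Subgroup.normalizer ((A ⊔ B : Subgroup G) : Set G) := by
  have key : ∀ {C : Subgroup G}, x ∈ Subgroup.normalizer (C : Set G) →
      Subgroup.map (MulAut.conj x).toMonoidHom C = C := by
    intro C hC
    ext n
    simp only [Subgroup.mem_map, MulEquiv.coe_toMonoidHom, MulAut.conj_apply]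
    constructor
    · rintro ⟨m, hm, rfl⟩
      exact (Subgroup.mem_normalizer_iff.mp hC m).mp hm
    · intro h
      exact ⟨x⁻¹ * n * x, (Subgroup.mem_normalizer_iff''.mp hC n).mp h, by group⟩
  rw [Subgroup.mem_normalizer_iff]
  intro h
  constructor
  · intro hh
    have : (MulAut.conj x) h ∈ Subgroup.map (MulAut.conj x).toMonoidHom (A ⊔ B) :=
      ⟨h, hh, rfl⟩
    rw [Subgroup.map_sup, key ha, key hb] at this
    simpa [MulAut.conj] using this
  · intro hh
    have : (MulAut.conj x) h ∈ A ⊔ B := by simpa [MulAut.conj] using hh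
    rw [← key ha, ← key hb, ← Subgroup.map_sup] at this
    rcases this with ⟨m, hm, hmh⟩
    have : m = h := (MulAut.conj x).injective hmh
    exact this ▸ hm

-- aux 2: image of normalizer element
lemma aux_map_mem_normalizer {G G' : Type*} [Group G] [Group G'] (f : G →* G')
    {H : Subgroup G} {x : G} (hx : x ∈ Subgroup.normalizer (H : Set G)) : f x ∈ Subgroup.normalizer ((Subgroup.map f H : Subgroup G') : Set G') := by
  rw [Subgroup.mem_normalizer_iff]
  intro n
  constructor
  · rintro ⟨h, hh, rfl⟩
    exact ⟨x * h * x⁻¹, (Subgroup.mem_normalizer_iff.mp hx h).mp hh, by simp [map_mul]⟩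
  · rintro ⟨h, hh, he⟩
    refine ⟨x⁻¹ * h * x, ?_, ?_⟩
    · have := (Subgroup.mem_normalizer_iff.mp hx (x⁻¹ * h * x)).mpr
      apply this
      simpa [mul_assoc] using hh
    · have : n = (f x)⁻¹ * (f x * n * (f x)⁻¹) * f x := by group
      rw [this, ← he]
      simp [map_mul, mul_assoc]

-- aux 3: residual maps onto residual under surjective hom
lemma aux_residual_map {F : GroupClass.{u}} (hFq : F.QClosed)
    {A B : Type u} [Group A] [Group B] (f : A →* B) (hf : Function.Surjective f)
    {RA : Subgroup A} {RB : Subgroup B}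
    (hA : IsResidual F A RA) (hB : IsResidual F B RB) :
    Subgroup.map f RA = RB := by
  obtain ⟨hRAn, hRAF, hRAmin⟩ := hA
  obtain ⟨hRBn, hRBF, hRBmin⟩ := hB
  apply le_antisymm
  · -- map f RA ≤ RB : show RA ≤ comap f RB via minimality
    rw [Subgroup.map_le_iff_le_comap]
    have hcn : (Subgroup.comap f RB).Normal := hRBn.comap f
    apply hRAmin _ hcn
    -- A ⧸ comap f RB  ≅ B ⧸ RB
    letI := hRBn
    let g : A →* B ⧸ RB := (QuotientGroup.mk' RB).comp f
    have hker : g.ker = Subgroup.comap f RB := by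
      ext a
      simp [g, MonoidHom.mem_ker, QuotientGroup.eq_one_iff]
    have hgsurj : Function.Surjective g :=
      (QuotientGroup.mk'_surjective RB).comp hf
    letI := hcn
    have e : (A ⧸ g.ker) ≃* (B ⧸ RB) := QuotientGroup.quotientKerEquivOfSurjective g hgsurj
    have e2 : (A ⧸ Subgroup.comap f RB) ≃* (A ⧸ g.ker) :=
      QuotientGroup.quotientMulEquivOfEq hker.symm
    exact hFq _ _ (e2.trans e).symm.toMonoidHom (e2.trans e).symm.surjective hRBF
  · -- RB ≤ map f RA via minimality of RB
    have hmn : (Subgroup.map f RA).Normal := hRAn.map f hf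
    apply hRBmin _ hmn
    letI := hRAn
    letI := hmn
    -- surjection A ⧸ RA → B ⧸ map f RA
    have hle : RA ≤ Subgroup.comap f (Subgroup.map f RA) := Subgroup.le_comap_map f RA
    let q : (A ⧸ RA) →* (B ⧸ Subgroup.map f RA) :=
      QuotientGroup.map RA (Subgroup.map f RA) f hle
    have hq : Function.Surjective q := by
      intro b
      obtain ⟨b', rfl⟩ := QuotientGroup.mk'_surjective _ b
      obtain ⟨a, rfl⟩ := hf b'
      exact ⟨QuotientGroup.mk a, rfl⟩
    exact hFq _ _ q hq hRAF

/-- For a quotient-closed Fitting class `ℌ`, a formation `𝔉`, and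
`N ⊴ G` finite, `N_{ℌ,𝔉}(G)N/N ≤ N_{ℌ,𝔉}(G/N)`. -/
theorem hfnorm_map_le (Hc F : GroupClass.{u})
    (hHn : Hc.NClosed) (hHp : Hc.NProdClosed) (hHq : Hc.QClosed)
    (hFq : F.QClosed) (hFsd : F.SubdirClosed)
    (res rad : ∀ (A : Type u) [Group A], Subgroup A)
    (hres : ∀ (A : Type u) [Group A] [Finite A], IsResidual F A (res A))
    (hrad : ∀ (A : Type u) [Group A] [Finite A], IsHRadical Hc A (rad A))
    (G : Type u) [Group G] [Finite G] (N : Subgroup G) [hN : N.Normal] :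
    Subgroup.map (QuotientGroup.mk' N) (HFnorm res rad G) ≤ HFnorm res rad (G ⧸ N) := by
  rintro x ⟨g, hg, rfl⟩
  rw [HFnorm, Subgroup.mem_iInf]
  intro Kbar
  set K : Subgroup G := Subgroup.comap (QuotientGroup.mk' N) Kbar with hK
  have hg' : g ∈ Subgroup.normalizer ((Subgroup.map K.subtype (res ↥K) ⊔ rad G : Subgroup G) : Set G) :=
    Subgroup.mem_iInf.mp hg K
  -- the restricted map f : K →* Kbar
  have hmem : ∀ k : ↥K, ((QuotientGroup.mk' N).domRestrict K) k ∈ Kbar := fun k => k.2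
  let f : ↥K →* ↥Kbar := ((QuotientGroup.mk' N).domRestrict K).codRestrict Kbar hmem
  have hfsurj : Function.Surjective f := by
    rintro ⟨b, hb⟩
    obtain ⟨a, rfl⟩ := QuotientGroup.mk'_surjective N b
    exact ⟨⟨a, hb⟩, rfl⟩
  -- Claim A: image of the residual
  have hA : Subgroup.map Kbar.subtype (res ↥Kbar) =
      Subgroup.map (QuotientGroup.mk' N) (Subgroup.map K.subtype (res ↥K)) := by
    have hres_eq : Subgroup.map f (res ↥K) = res ↥Kbar :=
      aux_residual_map hFq f hfsurj (hres ↥K) (hres ↥Kbar)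
    rw [← hres_eq, Subgroup.map_map, Subgroup.map_map]
    congr 1
  -- Claim B: image of the radical is below the radical
  have hB : Subgroup.map (QuotientGroup.mk' N) (rad G) ≤ rad (G ⧸ N) := by
    obtain ⟨hn, hm, hmax⟩ := hrad (G ⧸ N)
    refine hmax _ ((hrad G).1.map _ (QuotientGroup.mk'_surjective N)) ?_
    exact hHq ↥(rad G) _ ((QuotientGroup.mk' N).subgroupMap (rad G))
      (MonoidHom.subgroupMap_surjective _ _) (hrad G).2.1
  -- rewrite the target subgroup
  have hEq : Subgroup.map Kbar.subtype (res ↥Kbar) ⊔ rad (G ⧸ N) =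
      Subgroup.map (QuotientGroup.mk' N) (Subgroup.map K.subtype (res ↥K) ⊔ rad G)
        ⊔ rad (G ⧸ N) := by
    rw [Subgroup.map_sup, hA, sup_assoc, sup_eq_right.mpr hB]
  rw [hEq]
  refine aux_mem_normalizer_sup (aux_map_mem_normalizer _ hg') ?_
  have : (rad (G ⧸ N)).Normal := (hrad (G ⧸ N)).1
  rw [Subgroup.normalizer_eq_top_iff.mpr this]
  trivial
end

section
/- Let ℌ be a Fitting class and 𝔉 a subgroup-closed formation. If a finite group G satisfies G/G_ℌ ∈ 𝔑∘𝔉 (i.e., (G/G_ℌ)^𝔉 is nilpotent) and G > 1, then the ℌ-𝔉-norm N_{ℌ,𝔉}(G) = ⋂_{H ≤ G} N_G(H^𝔉 G_ℌ) is nontrivial. -/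
universe u

/-- A nontrivial nilpotent group has nontrivial center. -/
theorem center_ne_bot_of_isNilpotent (G : Type u) [Group G] [Nontrivial G]
    [Group.IsNilpotent G] : Subgroup.center G ≠ ⊥ := by
  intro hbot
  obtain ⟨n, hn⟩ := Group.IsNilpotent.nilpotent G
  have hall : ∀ m : ℕ, Subgroup.upperCentralSeries G m = ⊥ := by
    intro m
    induction m with
    | zero => exact Subgroup.upperCentralSeries_zero G
    | succ k ih =>
      ext x
      simp only [Subgroup.mem_upperCentralSeries_succ_iff, ih, Subgroup.mem_bot]
      constructor
      · intro hx
        have hxc : x ∈ Subgroup.center G := by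
          rw [Subgroup.mem_center_iff]
          intro g
          have hxg : x * g * x⁻¹ * g⁻¹ = 1 := hx g
          have hxg2 : (x * g) * (g * x)⁻¹ = 1 := by
            rw [mul_inv_rev, ← mul_assoc]; exact hxg
          exact (mul_inv_eq_one.mp hxg2).symm
        rw [hbot] at hxc
        exact hxc
      · rintro rfl
        intro y
        group
  have hbt : (⊥ : Subgroup G) ≠ ⊤ := by
    obtain ⟨x, hx⟩ := exists_ne (1 : G)
    intro h
    have : x ∈ (⊥ : Subgroup G) := by rw [h]; trivial
    exact hx (Subgroup.mem_bot.mp this)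
  have := hall n
  rw [hn] at this
  exact hbt this.symm

/-- For a Fitting class `ℌ` and a subgroup-closed formation `𝔉`,
if `G` is a nontrivial finite group with `G/G_ℌ ∈ 𝔑∘𝔉` (i.e. `(G/G_ℌ)^𝔉` is nilpotent),
then `N_{ℌ,𝔉}(G) > 1`. -/
theorem hfnorm_ne_bot (Hc F : GroupClass.{u})
    (hHn : Hc.NClosed) (hHp : Hc.NProdClosed)
    (hFq : F.QClosed) (hFsd : F.SubdirClosed) (hFs : F.SClosed)
    (res rad : ∀ (A : Type u) [Group A], Subgroup A)
    (hres : ∀ (A : Type u) [Group A] [Finite A], IsResidual F A (res A))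
    (hrad : ∀ (A : Type u) [Group A] [Finite A], IsHRadical Hc A (rad A))
    (G : Type u) [Group G] [Finite G] [Nontrivial G]
    (hG : letI := (hrad G).1; Group.IsNilpotent ↥(res (G ⧸ rad G))) :
    HFnorm res rad G ≠ ⊥ := by
  letI hRnorm : (rad G).Normal := (hrad G).1
  by_cases hRbot : rad G = ⊥
  · -- radical is trivial
    obtain ⟨hQnorm, hQF, hQmin⟩ := hres (G ⧸ rad G)
    set π : G →* G ⧸ rad G := QuotientGroup.mk' (rad G) with hπ
    set RG : Subgroup G := Subgroup.comap π (res (G ⧸ rad G)) with hRGdef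
    -- key: for every subgroup K, the image of its residual lies in RG
    have key : ∀ K : Subgroup G, Subgroup.map K.subtype (res ↥K) ≤ RG := by
      intro K
      obtain ⟨hKnorm, hKF, hKmin⟩ := hres ↥K
      set f : ↥K →* (G ⧸ rad G) ⧸ res (G ⧸ rad G) :=
        (QuotientGroup.mk' (res (G ⧸ rad G))).comp (π.comp K.subtype) with hf
      have hker : f.ker = Subgroup.comap K.subtype RG := by
        ext x
        simp [hf, hRGdef, MonoidHom.mem_ker, QuotientGroup.eq_one_iff, Subgroup.mem_comap, Subgroup.mem_subgroupOf]
      -- F (K ⧸ f.ker)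
      have hrange : F ↥f.range := hFs _ f.range hQF
      have hiso : ↥K ⧸ f.ker ≃* ↥f.range := QuotientGroup.quotientKerEquivRange f
      have hFq1 : F (↥K ⧸ f.ker) :=
        hFq _ _ hiso.symm.toMonoidHom hiso.symm.surjective hrange
      have hle' : res ↥K ≤ f.ker := hKmin f.ker f.normal_ker hFq1
      have hle : res ↥K ≤ Subgroup.comap K.subtype RG := hker ▸ hle'
      exact Subgroup.map_le_iff_le_comap.mpr hle
    -- the centralizer of RG is contained in the norm
    set C : Subgroup G := Subgroup.centralizer (RG : Set G) with hC
    have hCle : C ≤ HFnorm res rad G := by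
      rw [HFnorm]
      apply le_iInf
      intro K
      intro z hz
      have hterm : Subgroup.map K.subtype (res ↥K) ⊔ rad G ≤ RG := by
        apply sup_le (key K)
        rw [hRbot]; exact bot_le
      rw [Subgroup.mem_normalizer_iff (G := G)]
      intro x
      rw [hC, Subgroup.mem_centralizer_iff] at hz
      constructor
      · intro hx
        have hcomm := hz x (hterm hx)
        have : z * x * z⁻¹ = x := by
          rw [← hcomm]; group
        rw [this]; exact hx
      · intro hx
        have hcomm := hz _ (hterm hx)
        have : x = z * x * z⁻¹ := by
          have h3 : z * x = z * (z * x * z⁻¹) := by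
            rw [← hcomm]; group
          exact mul_left_cancel h3
        rw [this]; exact hx
    -- C is nontrivial
    have hCne : C ≠ ⊥ := by
      by_cases hRGbot : RG = ⊥
      · have : C = ⊤ := by
          rw [hC, eq_top_iff]
          intro g _
          rw [Subgroup.mem_centralizer_iff]
          intro h hh
          rw [hRGbot] at hh
          simp only [Subgroup.coe_bot, Set.mem_singleton_iff] at hh
          subst hh; group
        rw [this]
        obtain ⟨x, hx⟩ := exists_ne (1 : G)
        intro h
        have : x ∈ (⊥ : Subgroup G) := by rw [← h]; trivial
        exact hx (Subgroup.mem_bot.mp this)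
      · -- RG is nontrivial and nilpotent
        have hkerπ : π.ker = ⊥ := by rw [hπ, QuotientGroup.ker_mk']; exact hRbot
        have hinj : Function.Injective π := (MonoidHom.ker_eq_bot_iff π).mp hkerπ
        have hsurj : Function.Surjective π := QuotientGroup.mk'_surjective _
        set e : G ≃* G ⧸ rad G := MulEquiv.ofBijective π ⟨hinj, hsurj⟩ with he
        have hRGeq : RG = Subgroup.map e.symm (res (G ⧸ rad G)) := by
          rw [Subgroup.map_equiv_eq_comap_symm, MulEquiv.symm_symm, hRGdef]
          rfl
        haveI hnilQ : Group.IsNilpotent ↥(res (G ⧸ rad G)) := hG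
        have hnil : Group.IsNilpotent ↥RG := by
          rw [hRGeq]
          exact nilpotent_of_mulEquiv (e.symm.subgroupMap (res (G ⧸ rad G)))
        haveI : Nontrivial ↥RG := by
          rcases Subgroup.bot_or_exists_ne_one RG with h | ⟨x, hx, hx1⟩
          · exact absurd h hRGbot
          · exact ⟨⟨x, hx⟩, 1, by simpa using hx1⟩
        haveI := hnil
        have hcent := center_ne_bot_of_isNilpotent ↥RG
        rcases Subgroup.bot_or_exists_ne_one (Subgroup.center ↥RG) with h | ⟨w, hw, hw1⟩
        · exact absurd h hcent
        · intro hCbot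
          have hwC : (↑w : G) ∈ C := by
            rw [hC, Subgroup.mem_centralizer_iff]
            intro h hh
            have := (Subgroup.mem_center_iff.mp hw ⟨h, hh⟩)
            exact congrArg Subtype.val this
          rw [hCbot, Subgroup.mem_bot] at hwC
          apply hw1
          ext
          simpa using hwC
    intro hbot
    apply hCne
    rw [← le_bot_iff, ← hbot]
    exact hCle
  · -- radical is nontrivial: rad G ≤ HFnorm
    have hle : rad G ≤ HFnorm res rad G := by
      rw [HFnorm]
      apply le_iInf
      intro K
      exact le_sup_right.trans Subgroup.le_normalizer
    intro hbot
    apply hRbot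
    rw [← le_bot_iff, ← hbot]
    exact hle
end

section
/- Let 𝔉 be a formation, π a set of primes, and G a finite group. Then the π(𝔑∘𝔉)-hypercentre of G is trivial if and only if C_G(G^𝔉) = 1 and O_{π'}(G) = 1. -/
universe u

section MyHelpers




theorem nilpotent_of_forall_mul_comm {H : Type*} [Group H]
    (h : ∀ a b : H, a * b = b * a) : Group.IsNilpotent H := by
  refine ⟨1, ?_⟩
  rw [upperCentralSeries_one, Subgroup.eq_top_iff']
  intro x
  rw [Subgroup.mem_center_iff]
  intro y; exact h y x

theorem exists_central_of_normal_ne_bot {H : Type*} [Group H] [hnil : Group.IsNilpotent H]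
    {N : Subgroup H} (hN : N.Normal) (hb : N ≠ ⊥) :
    ∃ z : H, z ∈ N ∧ z ≠ 1 ∧ ∀ y : H, z * y = y * z := by
  obtain ⟨n, hn⟩ := hnil.nilpotent'
  have key : ∀ k : ℕ, N ⊓ upperCentralSeries H k = ⊥ ∨
      ∃ z : H, z ∈ N ∧ z ≠ 1 ∧ ∀ y : H, z * y = y * z := by
    intro k
    induction k with
    | zero => left; show N ⊓ Subgroup.upperCentralSeries H 0 = ⊥; simp
    | succ k ih =>
      rcases ih with hk | hz
      · rcases Subgroup.bot_or_exists_ne_one (N ⊓ upperCentralSeries H (k+1)) with hb' | ⟨z, hz, hz1⟩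
        · left; exact hb'
        · right
          refine ⟨z, hz.1, hz1, fun y => ?_⟩
          have hcomm : z * y * z⁻¹ * y⁻¹ ∈ N ⊓ upperCentralSeries H k := by
            constructor
            · have h1 : y * z⁻¹ * y⁻¹ ∈ N := hN.conj_mem _ (N.inv_mem hz.1) y
              have h2 := N.mul_mem hz.1 h1
              simpa [mul_assoc] using h2
            · exact (mem_upperCentralSeries_succ_iff).mp hz.2 y
          rw [hk, Subgroup.mem_bot] at hcomm
          have h3 : z * y * z⁻¹ = y := by
            have := mul_inv_eq_one.mp hcomm; exact this
          exact mul_inv_eq_iff_eq_mul.mp h3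
      · right; exact hz
  rcases key n with h0 | h1
  · rw [show upperCentralSeries H n = ⊤ from hn, inf_top_eq] at h0; exact absurd h0 hb
  · exact h1

theorem my_exists_minimal_normal {G : Type u} [Group G] [Finite G] (N : Subgroup G)
    (hN : N.Normal) (hb : N ≠ ⊥) :
    ∃ A : Subgroup G, A.Normal ∧ A ≠ ⊥ ∧ A ≤ N ∧
      ∀ B : Subgroup G, B.Normal → B ≤ A → B = ⊥ ∨ B = A := by
  classical
  have hS : {k | ∃ B : Subgroup G, (B.Normal ∧ B ≠ ⊥ ∧ B ≤ N) ∧ Nat.card B = k}.Nonempty :=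
    ⟨Nat.card N, N, ⟨hN, hb, le_rfl⟩, rfl⟩
  obtain ⟨A, ⟨hA1, hA2, hA3⟩, hAc⟩ := Nat.sInf_mem hS
  refine ⟨A, hA1, hA2, hA3, fun B hBn hBle => ?_⟩
  by_cases hBb : B = ⊥
  · exact Or.inl hBb
  right
  have h1 : Nat.card A ≤ Nat.card B := by
    rw [hAc]
    exact Nat.sInf_le ⟨B, ⟨hBn, hBb, hBle.trans hA3⟩, rfl⟩
  exact Subgroup.eq_of_le_of_card_ge hBle h1

theorem centralizer_normal_of_normal {G : Type u} [Group G] {N : Subgroup G} (hN : N.Normal) :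
    (Subgroup.centralizer (N : Set G)).Normal := by
  constructor
  intro n hn g
  rw [Subgroup.mem_centralizer_iff] at hn ⊢
  intro h hh
  have h1 : g⁻¹ * h * g ∈ N := by simpa using hN.conj_mem h hh g⁻¹
  have h2 := hn _ h1
  calc h * (g * n * g⁻¹) = g * ((g⁻¹ * h * g) * n) * g⁻¹ := by group
    _ = g * (n * (g⁻¹ * h * g)) * g⁻¹ := by rw [h2]
    _ = g * n * g⁻¹ * h := by group

instance semidirectProduct_finite {N G : Type*} [Group N] [Group G] {φ : G →* MulAut N}
    [Finite N] [Finite G] : Finite (N ⋊[φ] G) :=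
  Finite.of_injective (fun t => (t.left, t.right))
    (fun a b h => SemidirectProduct.ext (congrArg Prod.fst h) (congrArg Prod.snd h))

theorem opi_radical {G : Type u} [Group G] [Finite G] (σ : Set ℕ) :
    (Opi σ G).Normal ∧ IsPiGroup σ ↥(Opi σ G) := by
  classical
  set S : Set (Subgroup G) := {B | B.Normal ∧ IsPiGroup σ ↥B} with hSdef
  have hbot : (⊥ : Subgroup G) ∈ S := by
    refine ⟨inferInstance, fun p hp hd => ?_⟩
    rw [Subgroup.card_bot] at hd
    exact absurd (Nat.dvd_one.mp hd) hp.ne_one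
  have hBdd : BddAbove {k | ∃ B ∈ S, Nat.card B = k} := by
    refine ⟨Nat.card G, fun k ⟨B, _, hBk⟩ => ?_⟩
    rw [← hBk]
    exact Nat.le_of_dvd Nat.card_pos (Subgroup.card_subgroup_dvd_card B)
  have hne : {k | ∃ B ∈ S, Nat.card B = k}.Nonempty := ⟨Nat.card (⊥ : Subgroup G), ⊥, hbot, rfl⟩
  obtain ⟨M, hMS, hMc⟩ := Nat.sSup_mem hne hBdd
  have hmax : ∀ B ∈ S, Nat.card B ≤ Nat.card M := fun B hB => by
    rw [hMc]; exact le_csSup hBdd ⟨B, hB, rfl⟩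
  -- join closure
  have hsup : ∀ B ∈ S, B ⊔ M ∈ S := by
    rintro B ⟨hBn, hBp⟩
    haveI := hBn; haveI := hMS.1
    refine ⟨Subgroup.sup_normal B M, fun p hp hd => ?_⟩
    have hcard : Nat.card ↥(B ⊔ M) ∣ Nat.card B * Nat.card M := by
      have h1 : Nat.card ↥(B ⊔ M) =
          Nat.card (↥(B ⊔ M) ⧸ (M.subgroupOf (B ⊔ M))) * Nat.card (M.subgroupOf (B ⊔ M)) :=
        Subgroup.card_eq_card_quotient_mul_card_subgroup _
      have h2 : Nat.card (M.subgroupOf (B ⊔ M)) = Nat.card M :=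
        Nat.card_congr (Subgroup.subgroupOfEquivOfLe le_sup_right).toEquiv
      have h3 : Nat.card (↥(B ⊔ M) ⧸ (M.subgroupOf (B ⊔ M))) ∣ Nat.card B := by
        have e := QuotientGroup.quotientInfEquivProdNormalQuotient B M
        rw [← Nat.card_congr e.toEquiv]
        exact Subgroup.card_quotient_dvd_card _
      rw [h1, h2]
      exact mul_dvd_mul h3 dvd_rfl
    rcases (Nat.Prime.dvd_mul hp).mp (hd.trans hcard) with h | h
    · exact hBp p hp h
    · exact hMS.2 p hp h
  have hle : ∀ B ∈ S, B ≤ M := by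
    intro B hB
    have h1 : M ≤ B ⊔ M := le_sup_right
    have h2 : Nat.card ↥(B ⊔ M) ≤ Nat.card M := hmax _ (hsup B hB)
    have h3 : M = B ⊔ M := Subgroup.eq_of_le_of_card_ge h1 h2
    rw [h3] at *
    exact le_sup_left
  have hOpi : Opi σ G = M := by
    refine le_antisymm ?_ ?_
    · refine iSup_le fun N => iSup_le fun hN => iSup_le fun hp => hle N ⟨hN, hp⟩
    · exact le_iSup_of_le M (le_iSup_of_le hMS.1 (le_iSup_of_le hMS.2 le_rfl))
  rw [hOpi]
  exact hMS



variable {G : Type u} [Group G]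

/-- conjugation by `g` as a hom `↥L →* ↥L` for normal `L`. -/
def conjL (L : Subgroup G) (hL : L.Normal) (g : G) : ↥L →* ↥L where
  toFun x := ⟨g * x * g⁻¹, hL.conj_mem x x.2 g⟩
  map_one' := by ext; simp
  map_mul' x y := by ext; show g * ((x : G) * y) * g⁻¹ = g * x * g⁻¹ * (g * y * g⁻¹); group

/-- conjugation by `g` descended to the quotient `↥L ⧸ K.subgroupOf L`. -/
def conjQ (K L : Subgroup G) (hK : K.Normal) (hL : L.Normal) (g : G) :
    letI := hK.subgroupOf L
    (↥L ⧸ K.subgroupOf L) →* (↥L ⧸ K.subgroupOf L) :=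
  letI := hK.subgroupOf L
  QuotientGroup.lift (K.subgroupOf L)
    ((QuotientGroup.mk' (K.subgroupOf L)).comp (conjL L hL g))
    (by
      intro x hx
      rw [Subgroup.mem_subgroupOf] at hx
      rw [MonoidHom.mem_ker, MonoidHom.comp_apply, QuotientGroup.mk'_apply,
        QuotientGroup.eq_one_iff, Subgroup.mem_subgroupOf]
      exact hK.conj_mem _ hx g)

theorem conjQ_mk (K L : Subgroup G) (hK : K.Normal) (hL : L.Normal) (g : G) (x : ↥L) :
    letI := hK.subgroupOf L
    conjQ K L hK hL g (QuotientGroup.mk x) =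
      QuotientGroup.mk (⟨g * x * g⁻¹, hL.conj_mem x x.2 g⟩ : ↥L) := rfl

/-- The conjugation action of `G` on a quotient of normal subgroups,
as a homomorphism to the automorphism group. -/
def conjHom (K L : Subgroup G) (hK : K.Normal) (hL : L.Normal) :
    letI := hK.subgroupOf L
    G →* MulAut (↥L ⧸ K.subgroupOf L) := by
  letI := hK.subgroupOf L
  have key : ∀ (g g' : G) (a : ↥L ⧸ K.subgroupOf L),
      conjQ K L hK hL g (conjQ K L hK hL g' a) = conjQ K L hK hL (g * g') a := by
    intro g g' a
    induction a using QuotientGroup.induction_on with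
    | H x =>
      rw [conjQ_mk, conjQ_mk, conjQ_mk]
      congr 1
      ext
      simp [mul_assoc]
  have key1 : ∀ a : ↥L ⧸ K.subgroupOf L, conjQ K L hK hL 1 a = a := by
    intro a
    induction a using QuotientGroup.induction_on with
    | H x => rw [conjQ_mk]; congr 1; ext; simp
  refine
    { toFun := fun g =>
        { toFun := conjQ K L hK hL g
          invFun := conjQ K L hK hL g⁻¹
          left_inv := fun a => by rw [key, inv_mul_cancel]; exact key1 a
          right_inv := fun a => by rw [key, mul_inv_cancel]; exact key1 a
          map_mul' := map_mul _ }
      map_one' := ?_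
      map_mul' := ?_ }
  · ext a
    induction a using QuotientGroup.induction_on with
    | H x =>
      simp only [MulEquiv.coe_mk, Equiv.coe_fn_mk, MulAut.one_apply]
      exact key1 _
  · intro g g'
    ext a
    simp only [MulEquiv.coe_mk, Equiv.coe_fn_mk, MulAut.mul_apply]
    rw [key]

theorem conjHom_apply (K L : Subgroup G) (hK : K.Normal) (hL : L.Normal) (g : G) (x : ↥L) :
    letI := hK.subgroupOf L
    conjHom K L hK hL g (QuotientGroup.mk x) =
      QuotientGroup.mk (⟨g * x * g⁻¹, hL.conj_mem x x.2 g⟩ : ↥L) := rfl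

theorem mem_ker_conjHom (K L : Subgroup G) (hK : K.Normal) (hL : L.Normal) (g : G) :
    letI := hK.subgroupOf L
    (g ∈ (conjHom K L hK hL).ker ↔ ∀ x ∈ L, g * x * g⁻¹ * x⁻¹ ∈ K) := by
  letI := hK.subgroupOf L
  rw [MonoidHom.mem_ker]
  constructor
  · intro h x hx
    have h1 : conjHom K L hK hL g (QuotientGroup.mk ⟨x⁻¹, L.inv_mem hx⟩) =
        QuotientGroup.mk (⟨x⁻¹, L.inv_mem hx⟩ : ↥L) := by rw [h]; rfl
    rw [conjHom_apply, QuotientGroup.eq, Subgroup.mem_subgroupOf] at h1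
    simpa [mul_assoc] using h1
  · intro h
    ext a
    induction a using QuotientGroup.induction_on with
    | H x =>
      show conjHom K L hK hL g (QuotientGroup.mk x) = QuotientGroup.mk x
      rw [conjHom_apply, QuotientGroup.eq, Subgroup.mem_subgroupOf]
      have h2 := h (↑x⁻¹) (L.inv_mem x.2)
      simpa [mul_assoc] using h2


theorem opi_piHypercentral (π : Set ℕ) (X : GroupClass.{u}) (G : Type u) [Group G] [Finite G] :
    PiHypercentral π X G (Opi {p | p ∉ π} G) := by
  obtain ⟨hn, hpi⟩ := opi_radical (G := G) {p | p ∉ π}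
  refine ⟨hn, ?_⟩
  rintro K L hcf hle ⟨p, hpπ, hpp, hpd⟩
  exfalso
  have h1 : Nat.card (↥L ⧸ K.subgroupOf L) ∣ Nat.card ↥L :=
    Subgroup.card_quotient_dvd_card _
  have h2 : Nat.card ↥L ∣ Nat.card ↥(Opi {p | p ∉ π} G) := Subgroup.card_dvd_of_le hle
  exact (hpi p hpp (hpd.trans (h1.trans h2))) hpπ

theorem centralizer_piHypercentral (F : GroupClass.{u})
    (hQ : F.QClosed) (hSD : F.SubdirClosed) (π : Set ℕ)
    (res : ∀ (A : Type u) [Group A], Subgroup A)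
    (hres : ∀ (A : Type u) [Group A] [Finite A], IsResidual F A (res A))
    (G : Type u) [Group G] [Finite G] :
    PiHypercentral π (fun A iA => letI := iA; Group.IsNilpotent ↥(res A)) G
      (Subgroup.centralizer ((res G : Subgroup G) : Set G)) := by
  obtain ⟨hGn, hGF, hGmin⟩ := hres G
  refine ⟨centralizer_normal_of_normal hGn, ?_⟩
  intro K L hcf hLle _hp
  have hKn := hcf.1
  have hLn := hcf.2.1
  have hKL := hcf.2.2.1
  have hchief := hcf.2.2.2
  letI := hKn.subgroupOf L
  set f := conjHom K L hKn hLn with hfdef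
  refine ⟨f.ker, inferInstance, fun g => mem_ker_conjHom K L hKn hLn g,
    QuotientGroup.kerLift f, ?_, ?_⟩
  · intro g x
    rfl
  · -- show the residual of the semidirect product is nilpotent
    set Q := G ⧸ f.ker with hQdef
    set φq := QuotientGroup.kerLift f with hφqdef
    have hKker : K ≤ f.ker := by
      intro k hk
      rw [mem_ker_conjHom]
      intro x hx
      have h1 : x * k⁻¹ * x⁻¹ ∈ K := hKn.conj_mem _ (K.inv_mem hk) x
      have h2 := K.mul_mem hk h1
      simpa [mul_assoc] using h2
    have hresker : res G ≤ f.ker := by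
      intro r hr
      rw [mem_ker_conjHom]
      intro x hx
      have hcomm := hLle hx
      rw [Subgroup.mem_centralizer_iff] at hcomm
      have h1 : r * x * r⁻¹ * x⁻¹ = 1 := by rw [hcomm r hr]; group
      rw [h1]; exact K.one_mem
    have hFQ : F Q := by
      refine hQ (G ⧸ res G) Q (QuotientGroup.map _ _ (MonoidHom.id G) (by simpa using hresker))
        ?_ hGF
      intro y
      induction y using QuotientGroup.induction_on with
      | H g => exact ⟨QuotientGroup.mk g, rfl⟩
    haveI : Finite (↥L ⧸ K.subgroupOf L) := Quotient.finite _
    haveI : Finite Q := Quotient.finite _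
    set T := (↥L ⧸ K.subgroupOf L) ⋊[φq] Q with hTdef
    obtain ⟨hTn, hTF, hTmin⟩ := hres T
    have hFT1 : F (T ⧸ (SemidirectProduct.rightHom :
        T →* Q).ker) := by
      refine hQ Q _ ((QuotientGroup.mk' _).comp SemidirectProduct.inr) ?_ hFQ
      intro t
      induction t using QuotientGroup.induction_on with
      | H w =>
        refine ⟨SemidirectProduct.rightHom w, ?_⟩
        show QuotientGroup.mk (SemidirectProduct.inr (SemidirectProduct.rightHom w)) =
          QuotientGroup.mk w
        rw [QuotientGroup.eq]
        rw [MonoidHom.mem_ker]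
        simp
    haveI := hKn; haveI := hLn
    have hinfn : (L ⊓ f.ker).Normal := Subgroup.normal_inf_normal L f.ker
    rcases hchief (L ⊓ f.ker) hinfn (le_inf hKL.le hKker) inf_le_left with hM | hM
    · -- L ⊓ f.ker = K : the "nonabelian-ready" case, T ∈ F
      have hι0 : ∀ x ∈ K.subgroupOf L, ((QuotientGroup.mk' f.ker).comp L.subtype) x = 1 := by
        intro x hx
        rw [Subgroup.mem_subgroupOf] at hx
        rw [MonoidHom.comp_apply, QuotientGroup.mk'_apply, QuotientGroup.eq_one_iff]
        exact hKker hx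
      set ι := QuotientGroup.lift (K.subgroupOf L) ((QuotientGroup.mk' f.ker).comp L.subtype)
        hι0 with hιdef
      have hι_mk : ∀ x : ↥L, ι (QuotientGroup.mk x) = QuotientGroup.mk (x : G) := fun _ => rfl
      have hιker : ∀ a, ι a = 1 → a = 1 := by
        intro a ha
        induction a using QuotientGroup.induction_on with
        | H x =>
          rw [hι_mk, QuotientGroup.eq_one_iff] at ha
          rw [QuotientGroup.eq_one_iff, Subgroup.mem_subgroupOf, ← hM]
          exact ⟨x.2, ha⟩
      have hcompat : ∀ q : Q, ι.comp (φq q).toMonoidHom =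
          (MulAut.conj ((MonoidHom.id Q) q)).toMonoidHom.comp ι := by
        intro q
        induction q using QuotientGroup.induction_on with
        | H g =>
          ext x
          simp only [MonoidHom.comp_apply, MulEquiv.coe_toMonoidHom, MonoidHom.id_apply]
          show ι ((conjHom K L hKn hLn g) (QuotientGroup.mk x)) =
            MulAut.conj (QuotientGroup.mk g) (ι (QuotientGroup.mk x))
          rw [conjHom_apply, hι_mk, hι_mk, MulAut.conj_apply,
            ← QuotientGroup.mk_inv, ← QuotientGroup.mk_mul, ← QuotientGroup.mk_mul]
      set ψ := SemidirectProduct.lift ι (MonoidHom.id Q) hcompat with hψdef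
      have hψ_apply : ∀ t : T, ψ t = ι t.left * t.right := fun _ => rfl
      have hψsurj : Function.Surjective ψ := by
        intro q
        refine ⟨SemidirectProduct.inr q, ?_⟩
        rw [hψdef, SemidirectProduct.lift_inr]
        rfl
      have hFT2 : F (T ⧸ ψ.ker) := by
        have e := QuotientGroup.quotientKerEquivOfSurjective ψ hψsurj
        exact hQ Q _ e.symm.toMonoidHom e.symm.surjective hFQ
      have hinter : (SemidirectProduct.rightHom : T →* Q).ker ⊓ ψ.ker ≤ (⊥ : Subgroup T) := by
        intro t ht
        rw [Subgroup.mem_inf] at ht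
        obtain ⟨ht1, ht2⟩ := ht
        rw [MonoidHom.mem_ker] at ht1 ht2
        have htr : t.right = 1 := ht1
        have htl : t.left = 1 := by
          apply hιker
          have h3 := hψ_apply t
          rw [ht2, htr, mul_one] at h3
          exact h3.symm
        rw [Subgroup.mem_bot]
        exact SemidirectProduct.ext htl htr
      haveI : ((SemidirectProduct.rightHom : T →* Q).ker ⊓ ψ.ker).Normal :=
        Subgroup.normal_inf_normal _ _
      have h12 := hSD T (SemidirectProduct.rightHom : T →* Q).ker ψ.ker inferInstance
        inferInstance hFT1 hFT2
      have hFbot : F (T ⧸ (⊥ : Subgroup T)) := by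
        refine hQ _ _ (QuotientGroup.map _ _ (MonoidHom.id T) (by simpa using hinter)) ?_ h12
        intro y
        induction y using QuotientGroup.induction_on with
        | H t => exact ⟨QuotientGroup.mk t, rfl⟩
      have hFT : F T := hQ _ _ (QuotientGroup.quotientBot (G := T)).toMonoidHom
        (QuotientGroup.quotientBot (G := T)).surjective hFbot
      have hRbot : res T ≤ ⊥ := hTmin ⊥ inferInstance
        (hQ T _ (QuotientGroup.mk' ⊥) (QuotientGroup.mk'_surjective _) hFT)
      refine nilpotent_of_forall_mul_comm ?_
      intro a b
      have ha : (a : T) = 1 := by simpa using hRbot a.2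
      have hb : (b : T) = 1 := by simpa using hRbot b.2
      apply Subtype.ext
      show ((a : T) * b) = ((b : T) * a)
      rw [ha, hb]
    · -- L ⊓ f.ker = L : the abelian case
      have hLC : L ≤ f.ker := inf_eq_left.mp hM
      have hAcomm : ∀ a b : (↥L ⧸ K.subgroupOf L), a * b = b * a := by
        intro a b
        induction a using QuotientGroup.induction_on with
        | H x =>
        induction b using QuotientGroup.induction_on with
        | H y =>
        rw [← QuotientGroup.mk_mul, ← QuotientGroup.mk_mul, QuotientGroup.eq,
          Subgroup.mem_subgroupOf]
        have hv := (mem_ker_conjHom K L hKn hLn (↑x)⁻¹).mp (f.ker.inv_mem (hLC x.2)) ↑y y.2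
        have hv2 := hKn.conj_mem _ hv ((↑y)⁻¹ : G)
        simpa [mul_assoc] using hv2
      have hRle : res T ≤ (SemidirectProduct.rightHom : T →* Q).ker := hTmin _ inferInstance hFT1
      refine nilpotent_of_forall_mul_comm ?_
      intro a b
      have ha : ((a : T)).right = 1 := hRle a.2
      have hb : ((b : T)).right = 1 := hRle b.2
      apply Subtype.ext
      show ((a : T) * b) = ((b : T) * a)
      apply SemidirectProduct.ext
      · rw [SemidirectProduct.mul_left, SemidirectProduct.mul_left, ha, hb, map_one,
          MulAut.one_apply, MulAut.one_apply]
        exact hAcomm _ _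
      · rw [SemidirectProduct.mul_right, SemidirectProduct.mul_right, ha, hb]




section SDP
variable {A' Q : Type u} [Group A'] [Group Q] {φ : Q →* MulAut A'}

theorem sdp_conjleft (q : Q) (t : A' ⋊[φ] Q) :
    (SemidirectProduct.inr q * t * (SemidirectProduct.inr q)⁻¹).left = φ q t.left := by
  simp only [SemidirectProduct.mul_left, SemidirectProduct.mul_right,
    SemidirectProduct.left_inr, SemidirectProduct.right_inr, SemidirectProduct.inv_left,
    SemidirectProduct.inv_right, one_mul, inv_one, map_one, mul_one, MulAut.one_apply]

theorem sdp_ker_eq (t : A' ⋊[φ] Q) (ht : t ∈ (SemidirectProduct.rightHom : A' ⋊[φ] Q →* Q).ker) :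
    t = SemidirectProduct.inl t.left :=
  SemidirectProduct.ext (by rw [SemidirectProduct.left_inl])
    (by rw [SemidirectProduct.right_inl]; exact ht)

theorem sdp_inl_mem_ker (b : A') :
    SemidirectProduct.inl b ∈ (SemidirectProduct.rightHom : A' ⋊[φ] Q →* Q).ker := by
  rw [MonoidHom.mem_ker, SemidirectProduct.rightHom_inl]

theorem sdp_cent_act (s : A' ⋊[φ] Q)
    (hs : s ∈ Subgroup.centralizer
      (((SemidirectProduct.rightHom : A' ⋊[φ] Q →* Q).ker : Subgroup (A' ⋊[φ] Q)) :
        Set (A' ⋊[φ] Q))) (b : A') :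
    φ s.right b = s.left⁻¹ * b * s.left := by
  have h2 := (Subgroup.mem_centralizer_iff.mp hs) _ (sdp_inl_mem_ker b)
  have h3 := congrArg SemidirectProduct.left h2
  simp only [SemidirectProduct.mul_left, SemidirectProduct.left_inl,
    SemidirectProduct.right_inl, map_one, MulAut.one_apply] at h3
  rw [mul_assoc, eq_inv_mul_iff_mul_eq]
  exact h3.symm

/-- conjugation of an `inl`-image by an arbitrary element stays in the image,
provided the subgroup is invariant under the action (which covers inner
automorphisms by `hconj`). -/
theorem sdp_conj_mem_map (hconj : ∀ a : A', ∃ q : Q, φ q = MulAut.conj a)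
    (S : Subgroup A') (hS : ∀ (q : Q), ∀ m ∈ S, φ q m ∈ S)
    (n : A' ⋊[φ] Q) (hn : n ∈ Subgroup.map (SemidirectProduct.inl : A' →* A' ⋊[φ] Q) S)
    (w : A' ⋊[φ] Q) :
    w * n * w⁻¹ ∈ Subgroup.map (SemidirectProduct.inl : A' →* A' ⋊[φ] Q) S := by
  rw [Subgroup.mem_map] at hn
  obtain ⟨m, hm, rfl⟩ := hn
  have hdec : w = SemidirectProduct.inl w.left * SemidirectProduct.inr w.right :=
    (SemidirectProduct.inl_left_mul_inr_right w).symm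
  have key : ∀ (a : A') (q : Q),
      (SemidirectProduct.inl (φ := φ) a * SemidirectProduct.inr q) * SemidirectProduct.inl m *
        (SemidirectProduct.inl a * SemidirectProduct.inr q)⁻¹ =
      SemidirectProduct.inl (a * φ q m * a⁻¹) := by
    intro a q
    have h2 : SemidirectProduct.inl (φ q m) =
        SemidirectProduct.inr q * SemidirectProduct.inl m *
          (SemidirectProduct.inr (φ := φ) q)⁻¹ := by
      rw [← map_inv]
      exact SemidirectProduct.inl_aut _ _
    rw [map_mul, map_mul, map_inv, h2]
    group
  have h1 := key w.left w.right
  rw [← hdec] at h1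
  rw [h1, Subgroup.mem_map]
  refine ⟨w.left * φ w.right m * w.left⁻¹, ?_, rfl⟩
  obtain ⟨q', hq'⟩ := hconj w.left
  have h3 : w.left * φ w.right m * w.left⁻¹ = φ q' (φ w.right m) := by
    rw [hq', MulAut.conj_apply]
  rw [h3]
  exact hS _ _ (hS _ _ hm)

end SDP


theorem sdp_FQ (F : GroupClass.{u}) (hQc : F.QClosed)
    (res : ∀ (B : Type u) [Group B], Subgroup B)
    (hres : ∀ (B : Type u) [Group B] [Finite B], IsResidual F B (res B))
    {A' Q : Type u} [Group A'] [Group Q] [Finite A'] [Finite Q]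
    {φ : Q →* MulAut A'} (hφinj : ∀ q : Q, φ q = 1 → q = 1)
    (hnt : Nontrivial A')
    (hconj : ∀ a : A', ∃ q : Q, φ q = MulAut.conj a)
    (hDich : ∀ W : Subgroup (A' ⋊[φ] Q), W.Normal →
      W ≤ (SemidirectProduct.rightHom : A' ⋊[φ] Q →* Q).ker →
      W = ⊥ ∨ W = (SemidirectProduct.rightHom : A' ⋊[φ] Q →* Q).ker)
    (hX : Group.IsNilpotent ↥(res (A' ⋊[φ] Q))) :
    F Q := by
  obtain ⟨hTn, hTF, hTmin⟩ := hres (A' ⋊[φ] Q)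
  suffices hRle : res (A' ⋊[φ] Q) ≤ (SemidirectProduct.rightHom : A' ⋊[φ] Q →* Q).ker by
    have h1 : F ((A' ⋊[φ] Q) ⧸ (SemidirectProduct.rightHom : A' ⋊[φ] Q →* Q).ker) := by
      refine hQc ((A' ⋊[φ] Q) ⧸ res (A' ⋊[φ] Q))
        ((A' ⋊[φ] Q) ⧸ (SemidirectProduct.rightHom : A' ⋊[φ] Q →* Q).ker)
        (QuotientGroup.map _ _ (MonoidHom.id _) (by simpa using hRle)) ?_ hTF
      intro y
      induction y using QuotientGroup.induction_on with
      | H t => exact ⟨QuotientGroup.mk t, rfl⟩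
    have e := QuotientGroup.quotientKerEquivOfSurjective
      (SemidirectProduct.rightHom : A' ⋊[φ] Q →* Q) SemidirectProduct.rightHom_surjective
    exact hQc _ _ e.toMonoidHom e.surjective h1
  have habelian : Group.IsNilpotent A' → ∀ a b : A', a * b = b * a := by
    intro hnil
    haveI := hnil
    have hcenφ : ∀ (q : Q), ∀ m ∈ Subgroup.center A', φ q m ∈ Subgroup.center A' := by
      intro q m hm
      rw [Subgroup.mem_center_iff] at hm ⊢
      intro b
      obtain ⟨c, rfl⟩ := (φ q).surjective b
      rw [← map_mul, ← map_mul, hm]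
    have hWn : (Subgroup.map (SemidirectProduct.inl : A' →* A' ⋊[φ] Q)
        (Subgroup.center A')).Normal := ⟨fun n hn w => sdp_conj_mem_map hconj _ hcenφ n hn w⟩
    have hWle : Subgroup.map (SemidirectProduct.inl : A' →* A' ⋊[φ] Q) (Subgroup.center A') ≤
        (SemidirectProduct.rightHom : A' ⋊[φ] Q →* Q).ker := by
      rintro n hn
      rw [Subgroup.mem_map] at hn
      obtain ⟨m, _, rfl⟩ := hn
      exact sdp_inl_mem_ker m
    have htop : (⊤ : Subgroup A') ≠ ⊥ := by
      obtain ⟨a, b, hab⟩ := hnt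
      intro h
      have h1 : a ∈ (⊥ : Subgroup A') := h ▸ Subgroup.mem_top a
      have h2 : b ∈ (⊥ : Subgroup A') := h ▸ Subgroup.mem_top b
      rw [Subgroup.mem_bot] at h1 h2
      exact hab (h1.trans h2.symm)
    obtain ⟨z, _, hz1, hzc⟩ :=
      exists_central_of_normal_ne_bot (N := (⊤ : Subgroup A')) inferInstance htop
    have hmapb : Subgroup.map (SemidirectProduct.inl : A' →* A' ⋊[φ] Q)
        (Subgroup.center A') ≠ ⊥ := by
      intro h
      have h1 : SemidirectProduct.inl (φ := φ) z ∈
          (⊥ : Subgroup (A' ⋊[φ] Q)) := by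
        rw [← h]
        exact Subgroup.mem_map.mpr
          ⟨z, Subgroup.mem_center_iff.mpr (fun g => (hzc g).symm), rfl⟩
      rw [Subgroup.mem_bot] at h1
      refine hz1 (SemidirectProduct.inl_injective (φ := φ) ?_)
      rw [h1, map_one]
    rcases hDich _ hWn hWle with h | h
    · exact absurd h hmapb
    · intro a b
      have hb : SemidirectProduct.inl (φ := φ) b ∈
          Subgroup.map SemidirectProduct.inl (Subgroup.center A') := by
        rw [h]; exact sdp_inl_mem_ker b
      rw [Subgroup.mem_map] at hb
      obtain ⟨m, hm, hmb⟩ := hb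
      have hmb2 : m = b := SemidirectProduct.inl_injective hmb
      rw [← hmb2]
      exact Subgroup.mem_center_iff.mp hm a
  have hCto : (∀ a b : A', a * b = b * a) → ∀ s : A' ⋊[φ] Q,
      s ∈ Subgroup.centralizer
        (((SemidirectProduct.rightHom : A' ⋊[φ] Q →* Q).ker : Subgroup (A' ⋊[φ] Q)) :
          Set (A' ⋊[φ] Q)) →
      s ∈ (SemidirectProduct.rightHom : A' ⋊[φ] Q →* Q).ker := by
    intro hcomm s hs
    have h9 : φ s.right = 1 := by
      ext b
      rw [sdp_cent_act s hs b, hcomm s.left⁻¹ b, mul_assoc, inv_mul_cancel, mul_one]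
      rfl
    show SemidirectProduct.rightHom s = 1
    exact hφinj _ h9
  haveI := hTn
  haveI := hX
  rcases hDich (res (A' ⋊[φ] Q) ⊓ (SemidirectProduct.rightHom : A' ⋊[φ] Q →* Q).ker)
    (Subgroup.normal_inf_normal _ _) inf_le_right with hW0 | hWN
  · -- res ⊓ ker = ⊥
    have hRc : ∀ t ∈ res (A' ⋊[φ] Q), t ∈ Subgroup.centralizer
        (((SemidirectProduct.rightHom : A' ⋊[φ] Q →* Q).ker : Subgroup (A' ⋊[φ] Q)) :
          Set (A' ⋊[φ] Q)) := by
      intro t ht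
      rw [Subgroup.mem_centralizer_iff]
      intro w hw
      have hc1 : w * t * w⁻¹ * t⁻¹ ∈ res (A' ⋊[φ] Q) :=
        Subgroup.mul_mem _ (hTn.conj_mem t ht w) (Subgroup.inv_mem _ ht)
      have hc2 : w * t * w⁻¹ * t⁻¹ ∈
          (SemidirectProduct.rightHom : A' ⋊[φ] Q →* Q).ker := by
        have h1 : t * w⁻¹ * t⁻¹ ∈ (SemidirectProduct.rightHom : A' ⋊[φ] Q →* Q).ker :=
          (MonoidHom.normal_ker _).conj_mem _ (Subgroup.inv_mem _ hw) t
        have h2 := Subgroup.mul_mem _ hw h1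
        simpa [mul_assoc] using h2
      have hc3 : w * t * w⁻¹ * t⁻¹ = 1 := by
        have h4 := Subgroup.mem_inf.mpr ⟨hc1, hc2⟩
        rw [hW0, Subgroup.mem_bot] at h4
        exact h4
      have h3 : w * t * w⁻¹ = t := mul_inv_eq_one.mp hc3
      exact mul_inv_eq_iff_eq_mul.mp h3
    set μ : ↥(res (A' ⋊[φ] Q)) →* A' :=
      { toFun := fun t => (((t : A' ⋊[φ] Q)).left)⁻¹
        map_one' := by simp
        map_mul' := by
          intro s t
          have h8 := sdp_cent_act (↑s) (hRc _ s.2)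
          show (((↑s : A' ⋊[φ] Q) * ↑t).left)⁻¹ = _
          rw [SemidirectProduct.mul_left, h8]
          simp [mul_assoc] } with hμdef
    have hμ_apply : ∀ t : ↥(res (A' ⋊[φ] Q)), μ t = (((t : A' ⋊[φ] Q)).left)⁻¹ := fun _ => rfl
    have hμinj : ∀ t : ↥(res (A' ⋊[φ] Q)), μ t = 1 → t = 1 := by
      intro t ht
      rw [hμ_apply, inv_eq_one] at ht
      have h9 : φ ((t : A' ⋊[φ] Q)).right = 1 := by
        ext b
        rw [sdp_cent_act (↑t) (hRc _ t.2) b, ht]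
        simp
      have h10 := hφinj _ h9
      apply Subtype.ext
      exact SemidirectProduct.ext (by rw [ht]; rfl) (by rw [h10]; rfl)
    have hSφ : ∀ (q : Q), ∀ m ∈ μ.range, φ q m ∈ μ.range := by
      rintro q m ⟨t, rfl⟩
      refine ⟨⟨SemidirectProduct.inr q * (t : A' ⋊[φ] Q) * (SemidirectProduct.inr q)⁻¹,
        hTn.conj_mem _ t.2 _⟩, ?_⟩
      rw [hμ_apply]
      show ((SemidirectProduct.inr q * (↑t : A' ⋊[φ] Q) *
        (SemidirectProduct.inr q)⁻¹).left)⁻¹ = _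
      rw [sdp_conjleft, ← map_inv]
      rfl
    have hWn' : (Subgroup.map (SemidirectProduct.inl : A' →* A' ⋊[φ] Q) μ.range).Normal :=
      ⟨fun n hn w => sdp_conj_mem_map hconj _ hSφ n hn w⟩
    have hWle' : Subgroup.map (SemidirectProduct.inl : A' →* A' ⋊[φ] Q) μ.range ≤
        (SemidirectProduct.rightHom : A' ⋊[φ] Q →* Q).ker := by
      rintro n hn
      rw [Subgroup.mem_map] at hn
      obtain ⟨m, _, rfl⟩ := hn
      exact sdp_inl_mem_ker m
    rcases hDich _ hWn' hWle' with hS | hS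
    · intro t ht
      have h1 : SemidirectProduct.inl (φ := φ) (μ ⟨t, ht⟩) ∈
          Subgroup.map SemidirectProduct.inl μ.range :=
        Subgroup.mem_map.mpr ⟨μ ⟨t, ht⟩, ⟨⟨t, ht⟩, rfl⟩, rfl⟩
      rw [hS, Subgroup.mem_bot] at h1
      have h2 : μ ⟨t, ht⟩ = 1 := by
        refine SemidirectProduct.inl_injective (φ := φ) ?_
        rw [h1, map_one]
      have h3 := hμinj _ h2
      rw [Subtype.ext_iff] at h3
      show t ∈ _
      rw [show t = 1 from h3]
      exact Subgroup.one_mem _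
    · have hμsurj : Function.Surjective μ := by
        intro b
        have hb : SemidirectProduct.inl (φ := φ) b ∈
            Subgroup.map SemidirectProduct.inl μ.range := by
          rw [hS]; exact sdp_inl_mem_ker b
        rw [Subgroup.mem_map] at hb
        obtain ⟨m, hm, hmb⟩ := hb
        have hmb2 : m = b := SemidirectProduct.inl_injective hmb
        rw [← hmb2]
        exact hm
      have hcomm := habelian (nilpotent_of_surjective μ hμsurj)
      intro t ht
      exact hCto hcomm t (hRc t ht)
  · -- ker ≤ res
    have hN₁le : (SemidirectProduct.rightHom : A' ⋊[φ] Q →* Q).ker ≤ res (A' ⋊[φ] Q) := by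
      rw [← hWN]; exact inf_le_left
    haveI : Group.IsNilpotent
        ↥(((SemidirectProduct.rightHom : A' ⋊[φ] Q →* Q).ker).subgroupOf (res (A' ⋊[φ] Q))) :=
      Subgroup.isNilpotent _
    have e1 := Subgroup.subgroupOfEquivOfLe hN₁le
    haveI : Group.IsNilpotent ↥((SemidirectProduct.rightHom : A' ⋊[φ] Q →* Q).ker) :=
      nilpotent_of_surjective e1.toMonoidHom e1.surjective
    set ν : ↥((SemidirectProduct.rightHom : A' ⋊[φ] Q →* Q).ker) →* A' :=
      { toFun := fun t => ((t : A' ⋊[φ] Q)).left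
        map_one' := rfl
        map_mul' := by
          intro s t
          show ((↑s : A' ⋊[φ] Q) * ↑t).left = _
          rw [SemidirectProduct.mul_left, show ((↑s : A' ⋊[φ] Q)).right = 1 from s.2,
            map_one, MulAut.one_apply] } with hνdef
    have hνsurj : Function.Surjective ν := fun b =>
      ⟨⟨SemidirectProduct.inl b, sdp_inl_mem_ker b⟩, rfl⟩
    have hcomm := habelian (nilpotent_of_surjective ν hνsurj)
    obtain ⟨z0, hz0⟩ := exists_ne (1 : A')
    have hN₁b : ((SemidirectProduct.rightHom : A' ⋊[φ] Q →* Q).ker).subgroupOf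
        (res (A' ⋊[φ] Q)) ≠ ⊥ := by
      rw [Subgroup.ne_bot_iff_exists_ne_one]
      refine ⟨⟨⟨SemidirectProduct.inl z0, hN₁le (sdp_inl_mem_ker z0)⟩,
        by rw [Subgroup.mem_subgroupOf]; exact sdp_inl_mem_ker z0⟩, ?_⟩
      intro h
      rw [Subtype.ext_iff, Subtype.ext_iff] at h
      refine hz0 (SemidirectProduct.inl_injective (φ := φ) ?_)
      rw [show (SemidirectProduct.inl z0 : A' ⋊[φ] Q) = 1 from h, map_one]
    obtain ⟨z, hzmem, hz1, hzc⟩ := exists_central_of_normal_ne_bot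
      ((MonoidHom.normal_ker _).subgroupOf (res (A' ⋊[φ] Q))) hN₁b
    haveI := centralizer_normal_of_normal hTn
    have hVn : ((SemidirectProduct.rightHom : A' ⋊[φ] Q →* Q).ker ⊓
        Subgroup.centralizer ((res (A' ⋊[φ] Q) : Subgroup (A' ⋊[φ] Q)) :
          Set (A' ⋊[φ] Q))).Normal :=
      Subgroup.normal_inf_normal _ _
    have hzV : ((z : ↥(res (A' ⋊[φ] Q))) : A' ⋊[φ] Q) ∈
        (SemidirectProduct.rightHom : A' ⋊[φ] Q →* Q).ker ⊓
        Subgroup.centralizer ((res (A' ⋊[φ] Q) : Subgroup (A' ⋊[φ] Q)) :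
          Set (A' ⋊[φ] Q)) := by
      rw [Subgroup.mem_inf]
      refine ⟨(Subgroup.mem_subgroupOf).mp hzmem, ?_⟩
      · rw [Subgroup.mem_centralizer_iff]
        intro h hh
        have h7 := hzc ⟨h, hh⟩
        rw [Subtype.ext_iff, Subgroup.coe_mul, Subgroup.coe_mul] at h7
        exact h7.symm
    rcases hDich _ hVn inf_le_left with hV0 | hVN
    · exfalso
      rw [hV0, Subgroup.mem_bot] at hzV
      exact hz1 (Subtype.ext hzV)
    · intro t ht
      apply hCto hcomm
      rw [Subgroup.mem_centralizer_iff]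
      intro w hw
      have hwc : w ∈ (SemidirectProduct.rightHom : A' ⋊[φ] Q →* Q).ker ⊓
          Subgroup.centralizer ((res (A' ⋊[φ] Q) : Subgroup (A' ⋊[φ] Q)) :
            Set (A' ⋊[φ] Q)) := by
        rw [hVN]; exact hw
      exact (Subgroup.mem_centralizer_iff.mp hwc.2 t ht).symm


theorem hypercentral_member_eq_bot (F : GroupClass.{u})
    (hQ : F.QClosed) (π : Set ℕ)
    (res : ∀ (A : Type u) [Group A], Subgroup A)
    (hres : ∀ (A : Type u) [Group A] [Finite A], IsResidual F A (res A))
    (G : Type u) [Group G] [Finite G]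
    (hC : Subgroup.centralizer ((res G : Subgroup G) : Set G) = ⊥)
    (hO : Opi {p | p ∉ π} G = ⊥)
    (N : Subgroup G)
    (hN : PiHypercentral π (fun A iA => letI := iA; Group.IsNilpotent ↥(res A)) G N) :
    N = ⊥ := by
  obtain ⟨hGn, hGF, hGmin⟩ := hres G
  by_contra hNb
  obtain ⟨A, hAn, hAb, hAle, hAmin⟩ := my_exists_minimal_normal N hN.1 hNb
  have hA_not_pi : ¬ IsPiGroup {p | p ∉ π} ↥A := by
    intro hpi
    have h1 : A ≤ Opi {p | p ∉ π} G :=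
      le_iSup_of_le A (le_iSup_of_le hAn (le_iSup_of_le hpi le_rfl))
    rw [hO] at h1
    exact hAb (le_bot_iff.mp h1)
  rw [IsPiGroup] at hA_not_pi
  push_neg at hA_not_pi
  obtain ⟨p, hpp, hpd, hpπ⟩ := hA_not_pi
  rw [Set.mem_setOf_eq, not_not] at hpπ
  have hchf : IsChiefFactor G ⊥ A :=
    ⟨inferInstance, hAn, bot_lt_iff_ne_bot.mpr hAb, fun M hM _ h2 => hAmin M hM h2⟩
  letI hbotn : ((⊥ : Subgroup G).subgroupOf A).Normal := Subgroup.Normal.subgroupOf inferInstance A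
  have hcard : Nat.card (↥A ⧸ (⊥ : Subgroup G).subgroupOf A) = Nat.card ↥A := by
    rw [Subgroup.bot_subgroupOf]
    exact Nat.card_congr (QuotientGroup.quotientBot (G := ↥A)).toEquiv
  obtain ⟨C₀, hC₀n, hmem, φ, hφ, hX⟩ :=
    hN.2 ⊥ A hchf hAle ⟨p, hpπ, hpp, by rw [hcard]; exact hpd⟩
  haveI := hC₀n
  haveI : Finite (↥A ⧸ (⊥ : Subgroup G).subgroupOf A) := Quotient.finite _
  haveI : Finite (G ⧸ C₀) := Quotient.finite _
  -- basic quotient facts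
  have hmk1 : ∀ x : ↥A, (QuotientGroup.mk x : ↥A ⧸ (⊥ : Subgroup G).subgroupOf A) = 1 ↔ x = 1 := by
    intro x
    rw [QuotientGroup.eq_one_iff, Subgroup.mem_subgroupOf, Subgroup.mem_bot]
    exact ⟨fun h => Subtype.ext h, fun h => by rw [h]; rfl⟩
  have hinj : Function.Injective
      (QuotientGroup.mk : ↥A → ↥A ⧸ (⊥ : Subgroup G).subgroupOf A) := by
    intro a b h
    rw [QuotientGroup.eq, Subgroup.mem_subgroupOf, Subgroup.mem_bot] at h
    have h2 : a⁻¹ * b = 1 := Subtype.ext_iff.mpr h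
    exact inv_mul_eq_one.mp h2
  have hφinj : ∀ q : G ⧸ C₀, φ q = 1 → q = 1 := by
    intro q
    induction q using QuotientGroup.induction_on with
    | H g =>
      intro hq
      have hgC : g ∈ C₀ := by
        rw [hmem]
        intro x hx
        have h1 : φ (QuotientGroup.mk g) (QuotientGroup.mk (⟨x, hx⟩ : ↥A)) =
            QuotientGroup.mk (⟨x, hx⟩ : ↥A) := by rw [hq]; rfl
        rw [hφ g ⟨x, hx⟩] at h1
        have h2 := hinj h1
        have h3 : g * x * g⁻¹ = x := Subtype.ext_iff.mp h2
        rw [Subgroup.mem_bot, h3]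
        exact mul_inv_cancel x
      exact (QuotientGroup.eq_one_iff g).mpr hgC
  -- conjugation covers inner automorphisms
  have hconj : ∀ a' : ↥A ⧸ (⊥ : Subgroup G).subgroupOf A,
      ∃ q : G ⧸ C₀, φ q = MulAut.conj a' := by
    intro a'
    induction a' using QuotientGroup.induction_on with
    | H x =>
      refine ⟨QuotientGroup.mk (↑x : G), ?_⟩
      ext b
      induction b using QuotientGroup.induction_on with
      | H y =>
        rw [hφ (↑x : G) y, MulAut.conj_apply, ← QuotientGroup.mk_inv,
          ← QuotientGroup.mk_mul, ← QuotientGroup.mk_mul]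
        congr 1
  -- the dichotomy for normal subgroups of the semidirect product below ker rightHom
  have hD : ∀ W : Subgroup ((↥A ⧸ (⊥ : Subgroup G).subgroupOf A) ⋊[φ] (G ⧸ C₀)), W.Normal →
      W ≤ (SemidirectProduct.rightHom :
        (↥A ⧸ (⊥ : Subgroup G).subgroupOf A) ⋊[φ] (G ⧸ C₀) →* G ⧸ C₀).ker →
      W = ⊥ ∨ W = (SemidirectProduct.rightHom :
        (↥A ⧸ (⊥ : Subgroup G).subgroupOf A) ⋊[φ] (G ⧸ C₀) →* G ⧸ C₀).ker := by
    intro W hW hWle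
    set j : ↥A →* (↥A ⧸ (⊥ : Subgroup G).subgroupOf A) ⋊[φ] (G ⧸ C₀) :=
      (SemidirectProduct.inl (φ := φ)).comp (QuotientGroup.mk' ((⊥ : Subgroup G).subgroupOf A))
      with hjdef
    have hj_mk : ∀ x : ↥A, j x = SemidirectProduct.inl (QuotientGroup.mk x) := fun _ => rfl
    have hSWn : (Subgroup.map A.subtype (Subgroup.comap j W)).Normal := by
      constructor
      intro x hx g
      rw [Subgroup.mem_map] at hx ⊢
      obtain ⟨y, hy, rfl⟩ := hx
      rw [Subgroup.mem_comap, hj_mk] at hy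
      refine ⟨⟨g * (↑y : G) * g⁻¹, hAn.conj_mem (↑y : G) y.2 g⟩, ?_, rfl⟩
      rw [Subgroup.mem_comap, hj_mk]
      have h5 : (QuotientGroup.mk (⟨g * (↑y : G) * g⁻¹, hAn.conj_mem (↑y : G) y.2 g⟩ : ↥A) :
          ↥A ⧸ (⊥ : Subgroup G).subgroupOf A) = φ (QuotientGroup.mk g) (QuotientGroup.mk y) :=
        (hφ g y).symm
      rw [h5, SemidirectProduct.inl_aut, map_inv]
      exact hW.conj_mem _ hy _
    rcases hAmin _ hSWn (Subgroup.map_subtype_le _) with hSW | hSW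
    · left
      rw [eq_bot_iff]
      intro w hw
      obtain ⟨x, hx⟩ := QuotientGroup.mk'_surjective ((⊥ : Subgroup G).subgroupOf A) w.left
      rw [QuotientGroup.mk'_apply] at hx
      have hxW : x ∈ Subgroup.comap j W := by
        rw [Subgroup.mem_comap, hj_mk, hx, ← sdp_ker_eq w (hWle hw)]
        exact hw
      have hxbot : (↑x : G) ∈ (⊥ : Subgroup G) := by
        rw [← hSW]
        exact ⟨x, hxW, rfl⟩
      rw [Subgroup.mem_bot] at hxbot ⊢
      have hx1 : x = 1 := Subtype.ext hxbot
      rw [sdp_ker_eq w (hWle hw), ← hx, hx1]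
      simp
    · right
      refine le_antisymm hWle ?_
      intro n hn
      obtain ⟨x, hx⟩ := QuotientGroup.mk'_surjective ((⊥ : Subgroup G).subgroupOf A) n.left
      rw [QuotientGroup.mk'_apply] at hx
      have hxA : (↑x : G) ∈ Subgroup.map A.subtype (Subgroup.comap j W) := by
        rw [hSW]; exact x.2
      rw [Subgroup.mem_map] at hxA
      obtain ⟨y, hy, hyx⟩ := hxA
      have hyx2 : y = x := Subtype.coe_injective hyx
      rw [Subgroup.mem_comap, hj_mk, hyx2, hx, ← sdp_ker_eq n hn] at hy
      exact hy
  haveI hnt : Nontrivial (↥A ⧸ (⊥ : Subgroup G).subgroupOf A) := by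
    obtain ⟨x₀, hx₀⟩ := Subgroup.ne_bot_iff_exists_ne_one.mp hAb
    exact ⟨⟨QuotientGroup.mk x₀, 1, fun h => hx₀ ((hmk1 x₀).mp h)⟩⟩
  have hFQ : F (G ⧸ C₀) := sdp_FQ F hQ res hres hφinj hnt hconj hD hX
  have hsub : res G ≤ C₀ := hGmin C₀ hC₀n hFQ
  have hAc : A ≤ Subgroup.centralizer ((res G : Subgroup G) : Set G) := by
    intro a ha
    rw [Subgroup.mem_centralizer_iff]
    intro r hr
    have h2 := (hmem r).mp (hsub hr) a ha
    rw [Subgroup.mem_bot] at h2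
    have h3 : r * a * r⁻¹ = a := mul_inv_eq_one.mp h2
    exact mul_inv_eq_iff_eq_mul.mp h3
  rw [hC] at hAc
  exact hAb (le_bot_iff.mp hAc)

end MyHelpers

/-- For a formation `𝔉`, `Z_{π(𝔑∘𝔉)}(G) = 1` iff `C_G(G^𝔉) = 1`
and `O_{π'}(G) = 1`. -/
theorem piHypercentre_eq_bot_iff (F : GroupClass.{u})
    (hQ : F.QClosed) (hSD : F.SubdirClosed) (π : Set ℕ)
    (res : ∀ (A : Type u) [Group A], Subgroup A)
    (hres : ∀ (A : Type u) [Group A] [Finite A], IsResidual F A (res A))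
    (G : Type u) [Group G] [Finite G] :
    piHypercentre π (fun A iA => letI := iA; Group.IsNilpotent ↥(res A)) G = ⊥ ↔
      Subgroup.centralizer (res G : Set G) = ⊥ ∧ Opi {p | p ∉ π} G = ⊥ := by
  constructor
  · intro h
    have hc := centralizer_piHypercentral F hQ hSD π res hres G
    have ho := opi_piHypercentral π
      (fun A iA => letI := iA; Group.IsNilpotent ↥(res A)) G
    constructor
    · have h1 : Subgroup.centralizer ((res G : Subgroup G) : Set G) ≤
          piHypercentre π (fun A iA => letI := iA; Group.IsNilpotent ↥(res A)) G :=
        le_sSup hc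
      rw [h] at h1
      exact le_bot_iff.mp h1
    · have h1 : Opi {p | p ∉ π} G ≤
          piHypercentre π (fun A iA => letI := iA; Group.IsNilpotent ↥(res A)) G :=
        le_sSup ho
      rw [h] at h1
      exact le_bot_iff.mp h1
  · rintro ⟨h1, h2⟩
    show sSup {N : Subgroup G |
      PiHypercentral π (fun A iA => letI := iA; Group.IsNilpotent ↥(res A)) G N} = ⊥
    rw [sSup_eq_bot]
    intro N hN
    exact hypercentral_member_eq_bot F hQ π res hres G h1 h2 N hN
end

section
/- Let 𝔉 be a subgroup-closed formation and π a set of primes. For every finite group G, the π(𝔑∘𝔉)-hypercentre of G is contained in N^∞_{π'𝔉}(G), the terminal term of the ascending π'𝔉-norm series of G. -/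
universe u

section AuxLemmas

open scoped commutatorElement in
/-- In a nontrivial nilpotent group the center is nontrivial. -/
lemma center_ne_bot_of_nilpotent (X : Type u) [Group X] [Nontrivial X]
    (h : Group.IsNilpotent X) : Subgroup.center X ≠ ⊥ := by
  classical
  have hex : ∃ n, (⊤ : Subgroup X).lowerCentralSeries n = ⊥ := nilpotent_iff_lowerCentralSeries.mp h
  have hmspec : (⊤ : Subgroup X).lowerCentralSeries (Nat.find hex) = ⊥ := Nat.find_spec hex
  have hm0 : Nat.find hex ≠ 0 := by
    intro h0
    rw [h0, lowerCentralSeries_zero] at hmspec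
    exact top_ne_bot hmspec
  obtain ⟨k, hkm⟩ : ∃ k, Nat.find hex = k + 1 :=
    ⟨Nat.find hex - 1, (Nat.succ_pred_eq_of_pos (Nat.pos_of_ne_zero hm0)).symm⟩
  have hk : (⊤ : Subgroup X).lowerCentralSeries k ≠ ⊥ := Nat.find_min hex (by omega)
  obtain ⟨x, hx1⟩ := (Subgroup.ne_bot_iff_exists_ne_one).mp hk
  have hx := x.2
  intro hcbot
  apply hx1
  have hxc : (x : X) ∈ Subgroup.center X := by
    rw [Subgroup.mem_center_iff]
    intro g
    have : ⁅(x : X), g⁆ ∈ (⊤ : Subgroup X).lowerCentralSeries (k + 1) :=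
      Subgroup.commutator_mem_commutator hx (Subgroup.mem_top g)
    rw [← hkm, hmspec, Subgroup.mem_bot] at this
    have := commutatorElement_eq_one_iff_commute.mp this
    exact this.symm
  rw [hcbot, Subgroup.mem_bot] at hxc
  exact Subtype.ext hxc

end AuxLemmas

instance sdpFinite {A B : Type u} [Group A] [Group B] [Finite A] [Finite B]
    (φ : B →* MulAut A) : Finite (A ⋊[φ] B) :=
  Finite.of_injective (fun x => ((x.left, x.right) : A × B))
    (fun x y h => by
      cases x; cases y
      simpa [Prod.ext_iff, SemidirectProduct.ext_iff] using h)

/-- Conjugation by `g` fixes a normal subgroup. -/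
lemma conj_map_eq {X : Type u} [Group X] (D : Subgroup X) (hD : D.Normal) (g : X) :
    Subgroup.map (MulAut.conj g).toMonoidHom D = D := by
  ext x
  constructor
  · rintro ⟨d, hd, rfl⟩
    exact hD.conj_mem d hd g
  · intro hx
    exact ⟨g⁻¹ * x * g, by simpa using hD.conj_mem x hx g⁻¹, by simp [MulAut.conj]; group⟩

open SemidirectProduct commutatorElement in
/-- Core lemma: if `A ⋊[φ] B` has nilpotent `F`-residual, `φ` is faithful, and `A` is
"`B`-simple" (no proper nontrivial `φ`-invariant subgroups), then `B ∈ F`. -/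
lemma lemmaC (F : GroupClass.{u}) (hQ : F.QClosed)
    (res : ∀ (A : Type u) [Group A], Subgroup A)
    (hres : ∀ (A : Type u) [Group A] [Finite A], IsResidual F A (res A))
    (A B : Type u) [Group A] [Group B] [Finite A] [Finite B]
    (φ : B →* MulAut A) (hinj : Function.Injective φ)
    (hmin : ∀ U : Subgroup A, (∀ (b : B) (a : A), a ∈ U → φ b a ∈ U) → U = ⊥ ∨ U = ⊤)
    (hA : Nontrivial A)
    (hnil : Group.IsNilpotent ↥(res (A ⋊[φ] B))) : F B := by
  classical
  obtain ⟨hRn, hRq, hRmin⟩ := hres (A ⋊[φ] B)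
  haveI := hRn
  set W := A ⋊[φ] B with hWdef
  set R : Subgroup W := res (A ⋊[φ] B) with hRdef
  have hAcn : ((inl : A →* W).range).Normal := by
    rw [range_inl_eq_ker_rightHom]; exact MonoidHom.normal_ker _
  set Ac : Subgroup W := (inl : A →* W).range with hAc
  -- extraction principle
  have extract : ∀ V : Subgroup W, V.Normal → V ≤ Ac → V = ⊥ ∨ V = Ac := by
    intro V hVn hVle
    have hUinv : ∀ (b : B) (a : A), a ∈ V.comap inl → φ b a ∈ V.comap inl := by
      intro b a ha
      rw [Subgroup.mem_comap] at ha ⊢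
      have hmem : (inr b : W) * inl a * (inr b)⁻¹ ∈ V := hVn.conj_mem _ ha (inr b)
      rw [inl_aut]
      simpa using hmem
    have hVmap : Subgroup.map inl (V.comap inl) = V := by
      rw [Subgroup.map_comap_eq, ← hAc]
      exact inf_eq_right.mpr hVle
    rcases hmin (V.comap inl) hUinv with h | h
    · left; rw [← hVmap, h]
      exact Subgroup.map_bot _
    · right; rw [← hVmap, h, ← MonoidHom.range_eq_map]
  have hAcne : Ac ≠ ⊥ := by
    obtain ⟨a, ha⟩ := exists_ne (1 : A)
    intro hbot
    have : (inl a : W) ∈ Ac := ⟨a, rfl⟩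
    rw [hbot, Subgroup.mem_bot] at this
    exact ha (by simpa using congrArg SemidirectProduct.left this)
  -- Step 1: ⁅Ac, R⁆ = ⊥
  have hcomm : ⁅Ac, R⁆ = ⊥ := by
    have hinfn : (R ⊓ Ac).Normal :=
      ⟨fun x hx g => ⟨hRn.conj_mem _ hx.1 g, hAcn.conj_mem _ hx.2 g⟩⟩
    rcases extract (R ⊓ Ac) hinfn inf_le_right with hV | hV
    · have : ⁅Ac, R⁆ ≤ R ⊓ Ac := by
        haveI := hAcn
        exact le_inf (Subgroup.commutator_le_right _ _) (Subgroup.commutator_le_left _ _)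
      rw [hV] at this
      exact le_bot_iff.mp this
    · -- Ac ≤ R; use nilpotency chain
      have hAcR : Ac ≤ R := by rw [← hV]; exact inf_le_left
      set f : ℕ → Subgroup W := fun n => (fun X => ⁅X, R⁆)^[n] Ac with hf
      have hf0 : f 0 = Ac := rfl
      have hfs : ∀ n, f (n + 1) = ⁅f n, R⁆ := by
        intro n; rw [hf]; simp [Function.iterate_succ_apply']
      have hfnormal : ∀ n, (f n).Normal := by
        intro n; induction n with
        | zero => exact hAcn
        | succ n ih => rw [hfs]; haveI := ih; haveI := hRn; infer_instance
      have hfle : ∀ n, f n ≤ Ac := by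
        intro n; induction n with
        | zero => exact le_rfl
        | succ n ih =>
          rw [hfs]
          haveI := hfnormal n
          exact (Subgroup.commutator_le_left _ _).trans ih
      have hflcs : ∀ n, f n ≤ Subgroup.map R.subtype ((⊤ : Subgroup ↥R).lowerCentralSeries n) := by
        intro n; induction n with
        | zero =>
          rw [hf0, lowerCentralSeries_zero, ← MonoidHom.range_eq_map,
            Subgroup.range_subtype]
          exact hAcR
        | succ n ih =>
          rw [hfs]
          calc ⁅f n, R⁆ ≤ ⁅Subgroup.map R.subtype ((⊤ : Subgroup ↥R).lowerCentralSeries n),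
                Subgroup.map R.subtype ⊤⁆ := by
                apply Subgroup.commutator_mono ih
                simp [← MonoidHom.range_eq_map]
            _ = Subgroup.map R.subtype ⁅(⊤ : Subgroup ↥R).lowerCentralSeries n, ⊤⁆ :=
                (Subgroup.map_commutator _ _ _).symm
            _ = Subgroup.map R.subtype ((⊤ : Subgroup ↥R).lowerCentralSeries (n+1)) := rfl
      obtain ⟨n, hn⟩ := nilpotent_iff_lowerCentralSeries.mp hnil
      have hfbot : f n = ⊥ := by
        have := hflcs n
        rw [hn] at this
        simpa using le_bot_iff.mp (by simpa using this)
      rcases extract (f 1) (hfnormal 1) (hfle 1) with h1 | h1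
      · have : f 1 = ⁅Ac, R⁆ := by rw [hfs 0, hf0]
        rw [← this, h1]
      · exfalso
        have hall : ∀ m, f m = Ac := by
          intro m; induction m with
          | zero => exact hf0
          | succ m ih =>
            have e1 : f 1 = ⁅Ac, R⁆ := by rw [hfs 0, hf0]
            rw [hfs, ih, ← e1, h1]
        rw [hall n] at hfbot
        exact hAcne hfbot
  -- elementwise commuting
  have hcommel : ∀ (a : A), ∀ w ∈ R, (inl a : W) * w = w * inl a := by
    intro a w hw
    have : ⁅(inl a : W), w⁆ ∈ ⁅Ac, R⁆ :=
      Subgroup.commutator_mem_commutator ⟨a, rfl⟩ hw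
    rw [hcomm, Subgroup.mem_bot] at this
    exact commutatorElement_eq_one_iff_commute.mp this
  -- the key conjugation formula
  have hkey : ∀ w : W, w ∈ R → ∀ a : A, φ w.right a = w.left⁻¹ * a * w.left := by
    intro w hw a
    have h := hcommel a w hw
    have hleft := congrArg SemidirectProduct.left h
    rw [mul_left, mul_left] at hleft
    simp only [left_inl, right_inl, map_one, MulAut.one_apply] at hleft
    -- hleft : a * w.left = w.left * φ w.right a
    have h2 : w.left⁻¹ * (a * w.left) = w.left⁻¹ * (w.left * φ w.right a) := by
      rw [hleft]
    simp only [← mul_assoc, inv_mul_cancel, one_mul] at h2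
    exact h2.symm
  -- the projection subgroup
  have hmul_pair : ∀ (a₁ b₁ a₂ b₂), (⟨a₁, b₁⟩ : W) ∈ R → (⟨a₂, b₂⟩ : W) ∈ R →
      (⟨a₂ * a₁, b₁ * b₂⟩ : W) ∈ R := by
    intro a₁ b₁ a₂ b₂ h1 h2
    have := R.mul_mem h1 h2
    have hprod : (⟨a₁, b₁⟩ : W) * ⟨a₂, b₂⟩ = ⟨a₂ * a₁, b₁ * b₂⟩ := by
      have hk := hkey ⟨a₁, b₁⟩ h1 a₂
      ext
      · rw [mul_left]
        simp only at hk ⊢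
        rw [hk]; group
      · rw [mul_right]
    rwa [hprod] at this
  have hinv_pair : ∀ (a b), (⟨a, b⟩ : W) ∈ R → (⟨a⁻¹, b⁻¹⟩ : W) ∈ R := by
    intro a b h
    have := R.inv_mem h
    have hinv : (⟨a, b⟩ : W)⁻¹ = ⟨a⁻¹, b⁻¹⟩ := by
      ext
      · show φ b⁻¹ a⁻¹ = a⁻¹
        have hk := hkey ⟨a, b⟩ h
        apply (φ b).injective
        have : φ b (φ b⁻¹ a⁻¹) = a⁻¹ := by
          rw [← MulAut.mul_apply, ← map_mul, mul_inv_cancel, map_one, MulAut.one_apply]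
        rw [this, hk a⁻¹]
        simp only
        group
      · rfl
    rwa [hinv] at this
  -- the projection subgroup U₀
  set U₀ : Subgroup A :=
    { carrier := {a : A | ∃ b : B, (⟨a, b⟩ : W) ∈ R}
      one_mem' := ⟨1, by exact R.one_mem⟩
      mul_mem' := by
        rintro x y ⟨bx, hbx⟩ ⟨by', hby⟩
        exact ⟨by' * bx, hmul_pair y by' x bx hby hbx⟩
      inv_mem' := by
        rintro x ⟨bx, hbx⟩
        exact ⟨bx⁻¹, hinv_pair x bx hbx⟩ } with hU₀
  have hU₀inv : ∀ (b : B), ∀ a ∈ U₀, φ b a ∈ U₀ := by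
    rintro b a ⟨ba, hba⟩
    have hconj : (inr b : W) * ⟨a, ba⟩ * (inr b)⁻¹ ∈ R := hRn.conj_mem _ hba (inr b)
    refine ⟨b * ba * b⁻¹, ?_⟩
    have : (inr b : W) * ⟨a, ba⟩ * (inr b)⁻¹ = ⟨φ b a, b * ba * b⁻¹⟩ := by
      have hbinv : (inr b : W)⁻¹ = inr b⁻¹ := by rw [← map_inv]
      rw [hbinv]
      ext
      · show (1 * φ b a) * φ (b * ba) 1 = φ b a
        simp
      · show b * ba * b⁻¹ = b * ba * b⁻¹
        rfl
    rwa [this] at hconj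
  -- conclude R ≤ Ac
  have hRAc : R ≤ Ac := by
    rcases hmin U₀ hU₀inv with h | h
    · -- U₀ = ⊥ : R = ⊥
      intro w hw
      have hwl : w.left ∈ U₀ := ⟨w.right, by
        have : (⟨w.left, w.right⟩ : W) = w := rfl
        rwa [this]⟩
      rw [h, Subgroup.mem_bot] at hwl
      have hphi : φ w.right = 1 := by
        ext a
        rw [hkey w hw a, hwl]
        simp
      have : w.right = 1 := hinj (by rw [hphi, map_one])
      exact ⟨w.left, by ext <;> simp [hwl, this]⟩
    · -- U₀ = ⊤ : A is nilpotent hence abelian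
      haveI : Group.IsNilpotent ↥R := hnil
      have hcommA : ∀ x y : A, x * y = y * x := by
        -- build surjective hom R →* A
        have hpsi_mul : ∀ w₁ w₂ : ↥R, ((w₁ * w₂ : ↥R) : W).left⁻¹ =
            ((w₁ : W).left)⁻¹ * ((w₂ : W).left)⁻¹ := by
          intro w₁ w₂
          have : ((w₁ * w₂ : ↥R) : W).left = (w₁ : W).left * φ (w₁ : W).right (w₂ : W).left :=
            rfl
          rw [this, hkey (w₁ : W) w₁.2 (w₂ : W).left]
          group
        set ψ : ↥R →* A :=
          { toFun := fun w => ((w : W).left)⁻¹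
            map_one' := by simp
            map_mul' := hpsi_mul } with hψ
        have hψsurj : Function.Surjective ψ := by
          intro a
          have : a⁻¹ ∈ U₀ := by rw [h]; trivial
          obtain ⟨b, hb⟩ := this
          exact ⟨⟨⟨a⁻¹, b⟩, hb⟩, by simp [hψ]⟩
        haveI hAnil : Group.IsNilpotent A := nilpotent_of_surjective ψ hψsurj
        have hcinv : ∀ (b : B), ∀ a ∈ Subgroup.center A, φ b a ∈ Subgroup.center A := by
          intro b a ha
          rw [Subgroup.mem_center_iff] at ha ⊢
          intro g
          obtain ⟨g', rfl⟩ := (φ b).surjective g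
          rw [← map_mul, ← map_mul, ha g']
        have hcenter : Subgroup.center A = ⊤ := by
          rcases hmin (Subgroup.center A) hcinv with hc | hc
          · exact absurd hc (center_ne_bot_of_nilpotent A hAnil)
          · exact hc
        intro x y
        have hx : x ∈ Subgroup.center A := by rw [hcenter]; trivial
        rw [Subgroup.mem_center_iff] at hx
        exact (hx y).symm
      -- now every element of R has trivial right component
      intro w hw
      have hphi : φ w.right = 1 := by
        ext a
        rw [hkey w hw a]
        simp only [MulAut.one_apply]
        rw [hcommA w.left⁻¹ a]
        group
      have : w.right = 1 := hinj (by rw [hphi, map_one])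
      exact ⟨w.left, by ext <;> simp [this]⟩
  -- conclude F B via the right projection
  have hRker : R ≤ (rightHom : W →* B).ker := by
    rw [← range_inl_eq_ker_rightHom]; exact hRAc
  set θ : W ⧸ R →* B := QuotientGroup.lift R rightHom hRker with hθ
  have hθsurj : Function.Surjective θ := by
    intro b
    refine ⟨QuotientGroup.mk (inr b), ?_⟩
    rw [hθ, QuotientGroup.lift_mk]
    exact rightHom_inr b
  exact hQ (W ⧸ R) B θ hθsurj hRq

lemma opi_normal {X : Type u} [Group X] (π₀ : Set ℕ) : (Opi π₀ X).Normal := by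
  constructor
  intro x hx g
  have hle : Subgroup.map (MulAut.conj g).toMonoidHom (Opi π₀ X) ≤ Opi π₀ X := by
    rw [Opi, Subgroup.map_iSup]
    refine iSup_le ?_
    intro N
    rw [Subgroup.map_iSup]
    refine iSup_le ?_
    intro hN
    rw [Subgroup.map_iSup]
    refine iSup_le ?_
    intro hNpi
    rw [conj_map_eq N hN g]
    exact le_iSup_of_le N (le_iSup_of_le hN (le_iSup_of_le hNpi le_rfl))
  exact hle ⟨x, hx, rfl⟩

open scoped Pointwise commutatorElement in
/-- For a subgroup-closed formation `𝔉`,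
`Z_{π(𝔑∘𝔉)}(G) ≤ N^∞_{π'𝔉}(G)`. -/
theorem piHypercentre_le_norm_infty (F : GroupClass.{u})
    (hQ : F.QClosed) (hSD : F.SubdirClosed) (hS : F.SClosed) (π : Set ℕ)
    (res : ∀ (A : Type u) [Group A], Subgroup A)
    (hres : ∀ (A : Type u) [Group A] [Finite A], IsResidual F A (res A))
    (G : Type u) [Group G] [Finite G] (S : Subgroup G)
    (hterm : IsNormTerminal (piPrimeNorm π res) G S) :
    piHypercentre π (fun A iA => letI := iA; Group.IsNilpotent ↥(res A)) G ≤ S := by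
  classical
  obtain ⟨hchain, hSn, hbot⟩ := hterm
  letI := hSn
  refine sSup_le ?_
  rintro N ⟨hNn, hNhyp⟩
  have hmain : Subgroup.map (QuotientGroup.mk' S) N = ⊥ := by
    by_contra hne
    set H := G ⧸ S with hH
    set Nb := Subgroup.map (QuotientGroup.mk' S) N with hNb
    have hNbn : Nb.Normal := Subgroup.Normal.map hNn _ (QuotientGroup.mk'_surjective S)
    haveI : Finite (Subgroup H) :=
      Finite.of_injective (fun K : Subgroup H => (K : Set H)) SetLike.coe_injective
    obtain ⟨Lb, ⟨hLbn, hLble, hLbne⟩, hLbmin⟩ :=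
      wellFounded_lt.has_min {M : Subgroup H | M.Normal ∧ M ≤ Nb ∧ M ≠ ⊥}
        ⟨Nb, hNbn, le_rfl, hne⟩
    have hminLb : ∀ M : Subgroup H, M.Normal → M ≤ Lb → M = ⊥ ∨ M = Lb := by
      intro M hMn hMle
      by_cases hMb : M = ⊥
      · left; exact hMb
      · right
        by_contra hne2
        exact hLbmin M ⟨hMn, hMle.trans hLble, hMb⟩ (lt_of_le_of_ne hMle hne2)
    have hLbnorm : Lb ≤ piPrimeNorm π res H := by
      show Lb ≤ ⨅ K : Subgroup H,
        Subgroup.normalizer ((Subgroup.map K.subtype (res ↥K) ⊔ Opi {p | p ∉ π} H : Subgroup H) : Set H)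
      refine le_iInf ?_
      intro Kb
      by_cases hpi : IsPiGroup {p | p ∉ π} ↥Lb
      · have : Lb ≤ Opi {p | p ∉ π} H :=
          le_iSup_of_le Lb (le_iSup_of_le hLbn (le_iSup_of_le hpi le_rfl))
        exact (this.trans le_sup_right).trans Subgroup.le_normalizer
      · -- π case: use X-centrality
        rw [IsPiGroup] at hpi
        push_neg at hpi
        obtain ⟨p, hp, hpdvd, hpπ'⟩ := hpi
        have hpπ : p ∈ π := by
          simpa [Set.mem_setOf_eq, not_not] using hpπ'
        set mk : G →* H := QuotientGroup.mk' S with hmkdef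
        set L : Subgroup G := Subgroup.comap mk Lb with hL
        set L₀ : Subgroup G := L ⊓ N with hL₀
        set K₀ : Subgroup G := S ⊓ N with hK₀
        have hSL : S ≤ L := by
          intro s hs
          rw [hL, Subgroup.mem_comap]
          have h1 : mk s = 1 := (QuotientGroup.eq_one_iff s).mpr hs
          rw [h1]; exact Lb.one_mem
        have hmapL : Subgroup.map mk L = Lb :=
          Subgroup.map_comap_eq_self_of_surjective (QuotientGroup.mk'_surjective S) Lb
        have hLNS : L ≤ N ⊔ S := by
          have h1 := Subgroup.comap_mono (f := mk) hLble
          rw [hNb, Subgroup.comap_map_eq] at h1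
          have h2 : (QuotientGroup.mk' S).ker = S := QuotientGroup.ker_mk' S
          rw [h2] at h1
          exact h1
        have hdec : ∀ z ∈ L, ∃ n ∈ L₀, mk n = mk z := by
          intro z hz
          have hz2 : z ∈ (N : Set G) * (S : Set G) := by
            rw [← Subgroup.mul_normal N S]
            exact hLNS hz
          obtain ⟨n, hn, s, hs, rfl⟩ := hz2
          refine ⟨n, ⟨?_, hn⟩, ?_⟩
          · have h1 : (n * s) * s⁻¹ ∈ L := L.mul_mem hz (hSL (S.inv_mem hs))
            simpa using h1
          · rw [map_mul]
            have h1 : mk s = 1 := (QuotientGroup.eq_one_iff s).mpr hs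
            rw [h1, mul_one]
        have hK₀n : K₀.Normal := ⟨fun x hx g => ⟨hSn.conj_mem _ hx.1 g, hNn.conj_mem _ hx.2 g⟩⟩
        have hLnorm : L.Normal := Subgroup.Normal.comap hLbn mk
        have hL₀n : L₀.Normal :=
          ⟨fun x hx g => ⟨hLnorm.conj_mem _ hx.1 g, hNn.conj_mem _ hx.2 g⟩⟩
        have hK₀L₀ : K₀ ≤ L₀ := inf_le_inf_right N hSL
        have hK₀lt : K₀ < L₀ := by
          refine lt_of_le_of_ne hK₀L₀ ?_
          intro heq
          apply hLbne
          refine le_bot_iff.mp ?_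
          intro zq hzq
          rw [← hmapL] at hzq
          obtain ⟨z, hz, rfl⟩ := hzq
          obtain ⟨n, hn, hmkn⟩ := hdec z hz
          have hnS : n ∈ S := by rw [← heq] at hn; exact hn.1
          rw [Subgroup.mem_bot, ← hmkn]
          exact (QuotientGroup.eq_one_iff n).mpr hnS
        have hcfmin : ∀ M : Subgroup G, M.Normal → K₀ ≤ M → M ≤ L₀ → M = K₀ ∨ M = L₀ := by
          intro M hMn hKM hML
          rcases hminLb (Subgroup.map mk M)
              (Subgroup.Normal.map hMn _ (QuotientGroup.mk'_surjective S))
              (by rw [← hmapL]; exact Subgroup.map_mono (hML.trans inf_le_left)) with h | h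
          · left
            refine le_antisymm ?_ hKM
            intro m hm
            have h1 : mk m ∈ (⊥ : Subgroup H) := h ▸ Subgroup.mem_map_of_mem mk hm
            rw [Subgroup.mem_bot] at h1
            exact ⟨(QuotientGroup.eq_one_iff m).mp h1, (hML hm).2⟩
          · right
            refine le_antisymm hML ?_
            intro x hx
            have hxLb : mk x ∈ Subgroup.map mk M := by
              rw [h, ← hmapL]
              exact Subgroup.mem_map_of_mem mk hx.1
            obtain ⟨m, hm, hmx⟩ := hxLb
            have hker : m⁻¹ * x ∈ S := QuotientGroup.eq.mp hmx
            have hkerN : m⁻¹ * x ∈ N := N.mul_mem (N.inv_mem (hML hm).2) hx.2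
            have h2 : m⁻¹ * x ∈ M := hKM ⟨hker, hkerN⟩
            have h3 := M.mul_mem hm h2
            simpa using h3
        have hcf : IsChiefFactor G K₀ L₀ := ⟨hK₀n, hL₀n, hK₀lt, hcfmin⟩
        have hmemLb : ∀ x : ↥L₀, mk ↑x ∈ Lb := by
          intro x
          have h1 : (x : G) ∈ L := x.2.1
          rwa [hL, Subgroup.mem_comap] at h1
        set ψ : ↥L₀ →* ↥Lb := (mk.domRestrict L₀).codRestrict Lb hmemLb with hψdef
        have hψsurj : Function.Surjective ψ := by
          rintro ⟨zq, hzq⟩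
          rw [← hmapL] at hzq
          obtain ⟨z, hz, rfl⟩ := hzq
          obtain ⟨n, hn, hmkn⟩ := hdec z hz
          exact ⟨⟨n, hn⟩, Subtype.ext hmkn⟩
        have hψker : ψ.ker = K₀.subgroupOf L₀ := by
          ext x
          rw [MonoidHom.mem_ker, Subgroup.mem_subgroupOf]
          constructor
          · intro hx
            have h1 : mk ↑x = 1 := congrArg Subtype.val hx
            exact ⟨(QuotientGroup.eq_one_iff _).mp h1, x.2.2⟩
          · intro hx
            apply Subtype.ext
            show mk ↑x = 1
            exact (QuotientGroup.eq_one_iff _).mpr hx.1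
        letI hK₀sub : (K₀.subgroupOf L₀).Normal := hK₀n.subgroupOf L₀
        have hcard : Nat.card (↥L₀ ⧸ K₀.subgroupOf L₀) = Nat.card ↥Lb :=
          Nat.card_congr ((QuotientGroup.quotientMulEquivOfEq hψker.symm).trans
            (QuotientGroup.quotientKerEquivOfSurjective ψ hψsurj)).toEquiv
        have hXc := hNhyp K₀ L₀ hcf inf_le_right ⟨p, hpπ, hp, by rw [hcard]; exact hpdvd⟩
        obtain ⟨C, hCn, hCiff, φ₀, hφeq, hW⟩ := hXc
        letI := hCn
        have hφinj : Function.Injective φ₀ := by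
          rw [injective_iff_map_eq_one]
          intro b hb
          obtain ⟨g, rfl⟩ := QuotientGroup.mk_surjective b
          apply (QuotientGroup.eq_one_iff g).mpr
          rw [hCiff g]
          intro x hxL₀
          have h1' : φ₀ (QuotientGroup.mk g)
              (QuotientGroup.mk (⟨x⁻¹, L₀.inv_mem hxL₀⟩ : ↥L₀)) =
              QuotientGroup.mk (⟨x⁻¹, L₀.inv_mem hxL₀⟩ : ↥L₀) := by
            rw [hb]; rfl
          rw [hφeq g ⟨x⁻¹, L₀.inv_mem hxL₀⟩] at h1'
          have h2 := QuotientGroup.eq.mp h1'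
          rw [Subgroup.mem_subgroupOf] at h2
          have h2' : (g * x⁻¹ * g⁻¹)⁻¹ * x⁻¹ ∈ K₀ := by
            simpa using h2
          have h4 : g * x * g⁻¹ * x⁻¹ = (g * x⁻¹ * g⁻¹)⁻¹ * x⁻¹ := by group
          rw [h4]
          exact h2'
        have hminU : ∀ U : Subgroup (↥L₀ ⧸ K₀.subgroupOf L₀),
            (∀ (b : G ⧸ C) (a : ↥L₀ ⧸ K₀.subgroupOf L₀), a ∈ U → φ₀ b a ∈ U) →
            U = ⊥ ∨ U = ⊤ := by
          intro U hU
          set V : Subgroup ↥L₀ :=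
            Subgroup.comap (QuotientGroup.mk' (K₀.subgroupOf L₀)) U with hV
          set M : Subgroup G := Subgroup.map L₀.subtype V with hM
          have hUeq : U = Subgroup.map (QuotientGroup.mk' (K₀.subgroupOf L₀)) V :=
            (Subgroup.map_comap_eq_self_of_surjective
              (QuotientGroup.mk'_surjective _) U).symm
          have hK₀M : K₀ ≤ M := by
            intro x hx
            refine Subgroup.mem_map.mpr ⟨⟨x, hK₀L₀ hx⟩, ?_, rfl⟩
            rw [hV, Subgroup.mem_comap]
            have h1 : (QuotientGroup.mk' (K₀.subgroupOf L₀)) (⟨x, hK₀L₀ hx⟩ : ↥L₀) = 1 :=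
              (QuotientGroup.eq_one_iff _).mpr (by rwa [Subgroup.mem_subgroupOf])
            rw [h1]; exact U.one_mem
          have hML₀ : M ≤ L₀ := Subgroup.map_subtype_le V
          have hMn : M.Normal := by
            constructor
            intro x hx g
            obtain ⟨y, hy, rfl⟩ := Subgroup.mem_map.mp hx
            have hyL : g * L₀.subtype y * g⁻¹ ∈ L₀ := hL₀n.conj_mem _ y.2 g
            refine Subgroup.mem_map.mpr ⟨⟨g * L₀.subtype y * g⁻¹, hyL⟩, ?_, rfl⟩
            rw [hV, Subgroup.mem_comap]
            have h1 := hU (QuotientGroup.mk g) (QuotientGroup.mk y)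
              (by rwa [hV, Subgroup.mem_comap] at hy)
            rw [hφeq g y] at h1
            convert h1 using 2
            rfl
          rcases hcfmin M hMn hK₀M hML₀ with h | h
          · left
            have hVeq : V = K₀.subgroupOf L₀ := by
              have := Subgroup.comap_map_eq_self_of_injective
                (Subgroup.subtype_injective L₀) V
              rw [← this, ← hM, h]
              rfl
            rw [hUeq, hVeq]
            refine le_bot_iff.mp ?_
            rintro u ⟨v, hv, rfl⟩
            rw [Subgroup.mem_bot]
            exact (QuotientGroup.eq_one_iff v).mpr hv
          · right
            have hVeq : V = ⊤ := by
              have := Subgroup.comap_map_eq_self_of_injective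
                (Subgroup.subtype_injective L₀) V
              rw [← this, ← hM, h]
              exact Subgroup.subgroupOf_self L₀
            rw [hUeq, hVeq]
            exact Subgroup.map_top_of_surjective _ (QuotientGroup.mk'_surjective _)
        obtain ⟨x0, hx0L, hx0K⟩ := SetLike.exists_of_lt hK₀lt
        haveI hnt : Nontrivial (↥L₀ ⧸ K₀.subgroupOf L₀) := by
          refine ⟨⟨QuotientGroup.mk (⟨x0, hx0L⟩ : ↥L₀), 1, ?_⟩⟩
          intro hcon
          apply hx0K
          have h1 := (QuotientGroup.eq_one_iff (⟨x0, hx0L⟩ : ↥L₀)).mp hcon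
          rwa [Subgroup.mem_subgroupOf] at h1
        have hFB : F (G ⧸ C) := lemmaC F hQ res hres _ _ φ₀ hφinj hminU hnt hW
        have hSC : S ≤ C := by
          intro s hs
          rw [hCiff]
          intro x hxL₀
          refine ⟨?_, ?_⟩
          · have h1 : x * s⁻¹ * x⁻¹ ∈ S := hSn.conj_mem _ (S.inv_mem hs) x
            have h2 : s * (x * s⁻¹ * x⁻¹) ∈ S := S.mul_mem hs h1
            have h3 : s * (x * s⁻¹ * x⁻¹) = s * x * s⁻¹ * x⁻¹ := by group
            rwa [h3] at h2
          · have h1 : s * x * s⁻¹ ∈ N := hNn.conj_mem _ hxL₀.2 s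
            exact N.mul_mem h1 (N.inv_mem hxL₀.2)
        set Cb : Subgroup H := Subgroup.map mk C with hCb
        have hCbn : Cb.Normal := Subgroup.Normal.map hCn _ (QuotientGroup.mk'_surjective S)
        letI := hCbn
        have hθle : C ≤ Subgroup.comap mk Cb := Subgroup.le_comap_map _ _
        have hθsurj : Function.Surjective (QuotientGroup.map C Cb mk hθle) := by
          intro q
          obtain ⟨h, rfl⟩ := QuotientGroup.mk_surjective q
          obtain ⟨g, rfl⟩ := QuotientGroup.mk'_surjective S h
          exact ⟨QuotientGroup.mk g, QuotientGroup.map_mk C Cb mk hθle g⟩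
        have hFHCb : F (H ⧸ Cb) := hQ _ _ (QuotientGroup.map C Cb mk hθle) hθsurj hFB
        have hresle : Subgroup.map Kb.subtype (res ↥Kb) ≤ Cb := by
          set ψ₂ : ↥Kb →* (H ⧸ Cb) := (QuotientGroup.mk' Cb).comp Kb.subtype with hψ₂
          have hker₂ : ψ₂.ker = Cb.subgroupOf Kb := by
            ext x
            rw [MonoidHom.mem_ker, Subgroup.mem_subgroupOf]
            exact QuotientGroup.eq_one_iff _
          have hFrange : F ↥ψ₂.range := hS _ ψ₂.range hFHCb
          have hFq : F (↥Kb ⧸ ψ₂.ker) :=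
            hQ _ _ (QuotientGroup.quotientKerEquivRange ψ₂).symm.toMonoidHom
              (QuotientGroup.quotientKerEquivRange ψ₂).symm.surjective hFrange
          obtain ⟨hrn, hrq, hrmin⟩ := hres ↥Kb
          have h1 : res ↥Kb ≤ ψ₂.ker := hrmin ψ₂.ker ψ₂.normal_ker hFq
          rw [hker₂] at h1
          calc Subgroup.map Kb.subtype (res ↥Kb)
              ≤ Subgroup.map Kb.subtype (Cb.subgroupOf Kb) := Subgroup.map_mono h1
            _ = Cb ⊓ Kb := Subgroup.subgroupOf_map_subtype Cb Kb
            _ ≤ Cb := inf_le_left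
        have hcommLb : ∀ c ∈ Cb, ∀ z ∈ Lb, c * z = z * c := by
          intro c hc z hz
          obtain ⟨c₀, hc₀, rfl⟩ := hc
          rw [← hmapL] at hz
          obtain ⟨z₀, hz₀, rfl⟩ := hz
          obtain ⟨n, hn, hmkn⟩ := hdec z₀ hz₀
          rw [← hmkn]
          have hcn : c₀ * n * c₀⁻¹ * n⁻¹ ∈ K₀ := (hCiff c₀).mp hc₀ n hn
          have h1 : mk (c₀ * n * c₀⁻¹ * n⁻¹) = 1 :=
            (QuotientGroup.eq_one_iff _).mpr hcn.1
          have h2 : ⁅mk c₀, mk n⁆ = 1 := by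
            rw [commutatorElement_def]
            simpa [map_mul, map_inv] using h1
          exact (commutatorElement_eq_one_iff_commute.mp h2).eq
        intro z hz
        rw [Subgroup.mem_normalizer_iff]
        intro h
        have hmapJ : ∀ z' ∈ Lb, Subgroup.map (MulAut.conj z').toMonoidHom
            (Subgroup.map Kb.subtype (res ↥Kb) ⊔ Opi {p | p ∉ π} H) =
            Subgroup.map Kb.subtype (res ↥Kb) ⊔ Opi {p | p ∉ π} H := by
          intro z' hz'
          rw [Subgroup.map_sup]
          have hfix : Subgroup.map (MulAut.conj z').toMonoidHom
              (Subgroup.map Kb.subtype (res ↥Kb)) = Subgroup.map Kb.subtype (res ↥Kb) := by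
            ext x
            constructor
            · rintro ⟨j, hj, rfl⟩
              have hcj := hcommLb j (hresle hj) z' hz'
              have h1 : (MulAut.conj z').toMonoidHom j = j := by
                show z' * j * z'⁻¹ = j
                rw [← hcj]; group
              rw [h1]; exact hj
            · intro hx
              refine ⟨x, hx, ?_⟩
              have hcj := hcommLb x (hresle hx) z' hz'
              show z' * x * z'⁻¹ = x
              rw [← hcj]; group
          rw [hfix, conj_map_eq _ (opi_normal _) z']
        constructor
        · intro hh
          have h1 := Subgroup.mem_map_of_mem (MulAut.conj z).toMonoidHom hh
          rw [hmapJ z hz] at h1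
          exact h1
        · intro hh
          have hzinv : z⁻¹ ∈ Lb := Lb.inv_mem hz
          have h1 := Subgroup.mem_map_of_mem (MulAut.conj z⁻¹).toMonoidHom hh
          rw [hmapJ z⁻¹ hzinv] at h1
          have h2 : (MulAut.conj z⁻¹).toMonoidHom (z * h * z⁻¹) = h := by
            show z⁻¹ * (z * h * z⁻¹) * (z⁻¹)⁻¹ = h
            group
          rwa [h2] at h1
    rw [hbot] at hLbnorm
    exact hLbne (le_bot_iff.mp hLbnorm)
  intro x hx
  have hmem : (QuotientGroup.mk' S) x ∈ (⊥ : Subgroup (G ⧸ S)) :=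
    hmain ▸ Subgroup.mem_map_of_mem _ hx
  rw [Subgroup.mem_bot] at hmem
  exact (QuotientGroup.eq_one_iff x).mp hmem
end

section
/- Let 𝔉 be a formation, π a set of primes, G a finite group with O_{π'}(G) = 1 (trivial largest normal π'-subgroup), with a unique minimal normal subgroup N, and suppose N ≤ N_{π'𝔉}(G) and N ⊄ M for some maximal subgroup M of G. Then M^𝔉 is normal in G; hence M^𝔉 = 1 (i.e., M ∈ 𝔉) and G/N ∈ 𝔉, so G^𝔉 ≤ N. -/
universe u

open Pointwise

/-- Let `𝔉` be a formation, `G` a finite group with `O_{π'}(G) = 1`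
and a unique minimal normal subgroup `N ≤ N_{π'𝔉}(G)`, and let `M` be a maximal
subgroup of `G` with `N ⊄ M`. Then `M^𝔉 ⊴ G`, `M^𝔉 = 1`, `G/N ∈ 𝔉`, and `G^𝔉 ≤ N`. -/
theorem unique_minimal_norm_consequences (F : GroupClass.{u})
    (hQ : F.QClosed) (hSD : F.SubdirClosed) (π : Set ℕ)
    (res : ∀ (A : Type u) [Group A], Subgroup A)
    (hres : ∀ (A : Type u) [Group A] [Finite A], IsResidual F A (res A))
    (G : Type u) [Group G] [Finite G]
    (hO : Opi {p | p ∉ π} G = ⊥)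
    (N : Subgroup G) [hN : N.Normal] (hNbot : N ≠ ⊥)
    (huniq : ∀ M : Subgroup G, M.Normal → M ≠ ⊥ → N ≤ M)
    (hNle : N ≤ piPrimeNorm π res G)
    (M : Subgroup G) (hM : IsCoatom M) (hNM : ¬ N ≤ M) :
    (Subgroup.map M.subtype (res ↥M)).Normal ∧ res ↥M = ⊥ ∧
      F (G ⧸ N) ∧ res G ≤ N := by
  set R : Subgroup G := Subgroup.map M.subtype (res ↥M) with hR
  obtain ⟨hMresN, hFM, _⟩ := hres ↥M
  -- N normalizes R
  have hNnorm : N ≤ Subgroup.normalizer (R : Set G) := by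
    refine le_trans hNle ?_
    have h := iInf_le (fun K : Subgroup G =>
      Subgroup.normalizer ((Subgroup.map K.subtype (res ↥K) ⊔ Opi {p | p ∉ π} G : Subgroup G) : Set G)) M
    simpa [piPrimeNorm, HFnorm, hO, hR] using h
  -- M normalizes R
  have hMnorm : M ≤ Subgroup.normalizer (R : Set G) := by
    intro m hm
    rw [Subgroup.mem_normalizer_iff]
    intro h
    constructor
    · rintro ⟨x, hx, rfl⟩
      exact ⟨⟨m, hm⟩ * x * ⟨m, hm⟩⁻¹, hMresN.conj_mem x hx ⟨m, hm⟩, rfl⟩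
    · rintro ⟨x, hx, hxe⟩
      refine ⟨⟨m, hm⟩⁻¹ * x * ⟨m, hm⟩, hMresN.conj_mem' x hx ⟨m, hm⟩, ?_⟩
      have h1 : M.subtype (⟨m, hm⟩⁻¹ * x * ⟨m, hm⟩) = m⁻¹ * (M.subtype x) * m := by
        simp
      rw [h1, hxe]
      group
  -- M ⊔ N = ⊤
  have hsup : M ⊔ N = ⊤ := by
    refine hM.2 (M ⊔ N) (lt_of_le_of_ne le_sup_left ?_)
    intro h
    exact hNM (h ▸ le_sup_right)
  have hRnormal : R.Normal := by
    rw [← Subgroup.normalizer_eq_top_iff]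
    exact top_le_iff.mp (hsup ▸ sup_le hMnorm hNnorm)
  -- R = ⊥
  have hRbot : R = ⊥ := by
    by_contra hne
    exact hNM (le_trans (huniq R hRnormal hne) (Subgroup.map_subtype_le _))
  have hresMbot : res ↥M = ⊥ := by
    have := (Subgroup.map_eq_bot_iff (res ↥M)).mp hRbot
    rwa [Subgroup.ker_subtype, le_bot_iff] at this
  -- F M
  have hFMgrp : F ↥M := by
    have e : (↥M ⧸ res ↥M) ≃* ↥M :=
      (QuotientGroup.quotientMulEquivOfEq hresMbot).trans
        (QuotientGroup.quotientBot (G := ↥M))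
    exact hQ _ _ e.toMonoidHom e.surjective hFM
  -- F (G ⧸ N)
  have hFGN : F (G ⧸ N) := by
    refine hQ _ _ ((QuotientGroup.mk' N).comp M.subtype) ?_ hFMgrp
    intro q
    induction q using QuotientGroup.induction_on with
    | H g =>
      have hg : g ∈ ((M : Set G) * (N : Set G)) := by
        rw [← Subgroup.mul_normal]
        exact hsup ▸ Subgroup.mem_top g
      obtain ⟨m, hm, n, hn, rfl⟩ := hg
      refine ⟨⟨m, hm⟩, ?_⟩
      simp only [MonoidHom.comp_apply, Subgroup.coe_subtype, QuotientGroup.mk'_apply]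
      exact (QuotientGroup.mk_mul_of_mem m hn).symm
  obtain ⟨_, _, hminG⟩ := hres G
  exact ⟨hRnormal, hresMbot, hFGN, hminG N hN hFGN⟩
end
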